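/- arXiv:2604.23119 — 4 statements merged into one kernel-verified Lean document; each statement's English description precedes it below -/
import Mathlib

section
/- Let n_a, n_b, n_ab be natural numbers with n_ab ≤ min(n_a, n_b), and let C_a ⊆ F_2^{n_a} and C_b ⊆ F_2^{n_b} be binary linear codes with minimum distances d_a ≥ 2 and d_b ≥ 2 respectively, such that for every coordinate i the minimum Hamming weight among codewords of C_a with x_i = 1 equals d_a, and for every coordinate j the minimum Hamming weight among codewords of C_b with x_j = 1 equals d_b (coordinates 1,…,n_ab of the two codes are shared). For ε ∈ (0,1) define the schedule-(a,b) quantities: Pa(i) = Φ_{C_a,i}(ε,…,ε); q_k = ε·Pa(k) for k ≤ n_ab and q_k = ε for k > n_ab; Pb(j) = Φ_{C_b,j}(q); and P^{ab}(ε) = Σ_{k=1}^{n_ab} ε·Pa(k)·Pb(k) + Σ_{i=n_ab+1}^{n_a} ε·Pa(i) + Σ_{j=n_ab+1}^{n_b} ε·Pb(j). Define P^{ba}(ε) symmetrically with the roles of a and b exchanged. Let g_a(i) = #{x ∈ C_a : x_i = 1, w(x) = d_a} and h_a(i) = #{x ∈ C_a : x_i = 1, w(x) = d_a, supp(x) ⊆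 {n_ab+1,…,n_a}}. If d_a < d_b and Σ_{i=n_ab+1}^{n_a} (g_a(i) − h_a(i)) > 0, then there exists ε₀ > 0 such that for all ε ∈ (0, ε₀), P^{ba}(ε) < P^{ab}(ε), i.e., updating the constraint node with larger minimum distance first yields a strictly smaller total erasure probability. -/
open Finset
open scoped Classical
set_option maxHeartbeats 1000000

/-- Hamming weight of a binary word. -/
def wt {n : ℕ} (x : Fin n → ZMod 2) : ℕ := (univ.filter (fun j => x j ≠ 0)).card

/-- `phi C i q` is the probability, when the all-zero codeword is sent over a binary erasure
channel in which position `j ≠ i` is erased independently with probability `q j`, that the APP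
decoder's output message to position `i` is an erasure: the sum, over erasure patterns
`E ⊆ {j | j ≠ i}` such that some codeword `x ∈ C` has `x i = 1` and support contained in
`E ∪ {i}`, of the probability of the pattern `E`. -/
noncomputable def phi {n : ℕ} (C : Submodule (ZMod 2) (Fin n → ZMod 2)) (i : Fin n)
    (q : Fin n → ℝ) : ℝ :=
  ∑ E ∈ (univ.erase i).powerset,
    if ∃ x ∈ C, x i = 1 ∧ univ.filter (fun j => x j ≠ 0) ⊆ insert i E
    then (∏ j ∈ E, q j) * ∏ j ∈ (univ.erase i) \ E, (1 - q j)
    else 0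

/-- `phi` with natural-number indexing (junk value `0` out of range). -/
noncomputable def phiNat {n : ℕ} (C : Submodule (ZMod 2) (Fin n → ZMod 2)) (k : ℕ)
    (q : ℕ → ℝ) : ℝ :=
  if h : k < n then phi C ⟨k, h⟩ (fun j => q j.1) else 0


def suppF {n : ℕ} (x : Fin n → ZMod 2) : Finset (Fin n) := univ.filter (fun j => x j ≠ 0)

lemma wt_eq_card_suppF {n : ℕ} (x : Fin n → ZMod 2) : wt x = (suppF x).card := rfl

lemma zmod2_eq_one : ∀ {a : ZMod 2}, a ≠ 0 → a = 1 := by decide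

lemma eq_of_suppF_eq {n : ℕ} {x y : Fin n → ZMod 2} (h : suppF x = suppF y) : x = y := by
  funext j
  by_cases hx : x j = 0
  · have hj : j ∉ suppF x := by simp [suppF, hx]
    rw [h] at hj
    have : y j = 0 := by by_contra hy; exact hj (by simp [suppF, hy])
    rw [hx, this]
  · have hj : j ∈ suppF x := by simp [suppF, hx]
    rw [h] at hj
    have hy : y j ≠ 0 := by simpa [suppF] using hj
    rw [zmod2_eq_one hx, zmod2_eq_one hy]

lemma ne_zero_of_coord_one {n : ℕ} {x : Fin n → ZMod 2} {i : Fin n} (h : x i = 1) : x ≠ 0 := by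
  intro h0
  rw [h0] at h
  exact one_ne_zero h.symm

section phiLemmas

variable {n : ℕ} (C : Submodule (ZMod 2) (Fin n → ZMod 2)) (i : Fin n) (q : Fin n → ℝ)

lemma phi_nonneg (hq0 : ∀ j, 0 ≤ q j) (hq1 : ∀ j, q j ≤ 1) : 0 ≤ phi C i q := by
  apply Finset.sum_nonneg
  intro E _
  split_ifs
  · exact mul_nonneg (Finset.prod_nonneg fun j _ => hq0 j)
      (Finset.prod_nonneg fun j _ => by linarith [hq1 j])
  · exact le_refl 0

lemma phi_le_one (hq0 : ∀ j, 0 ≤ q j) (hq1 : ∀ j, q j ≤ 1) : phi C i q ≤ 1 := by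
  have key : phi C i q ≤ ∑ E ∈ (univ.erase i).powerset,
      (∏ j ∈ E, q j) * ∏ j ∈ (univ.erase i) \ E, (1 - q j) := by
    apply Finset.sum_le_sum
    intro E _
    split_ifs
    · exact le_refl _
    · exact mul_nonneg (Finset.prod_nonneg fun j _ => hq0 j)
        (Finset.prod_nonneg fun j _ => by linarith [hq1 j])
  have : ∑ E ∈ (univ.erase i).powerset,
      (∏ j ∈ E, q j) * ∏ j ∈ (univ.erase i) \ E, (1 - q j)
      = ∏ j ∈ univ.erase i, (q j + (1 - q j)) := (Finset.prod_add _ _ _).symm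
  rw [this] at key
  simpa using key

/-- each good pattern has size at least `d - 1`. -/
lemma good_card_ge {d : ℕ} (hd : ∀ x ∈ C, x ≠ 0 → d ≤ wt x) {E : Finset (Fin n)}
    (hgood : ∃ x ∈ C, x i = 1 ∧ univ.filter (fun j => x j ≠ 0) ⊆ insert i E) :
    d - 1 ≤ E.card := by
  obtain ⟨x, hxC, hxi, hsub⟩ := hgood
  have hwt : d ≤ wt x := hd x hxC (ne_zero_of_coord_one hxi)
  have : wt x ≤ (insert i E).card := Finset.card_le_card hsub
  have := Finset.card_insert_le i E
  omega

lemma prod_one_sub_le_one (hq0 : ∀ j, 0 ≤ q j) (hq1 : ∀ j, q j ≤ 1) (s : Finset (Fin n)) :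
    ∏ j ∈ s, (1 - q j) ≤ 1 :=
  Finset.prod_le_one (fun j _ => by linarith [hq1 j]) (fun j _ => by linarith [hq0 j])

lemma term_le_prod (hq0 : ∀ j, 0 ≤ q j) (hq1 : ∀ j, q j ≤ 1) (E : Finset (Fin n)) :
    (∏ j ∈ E, q j) * ∏ j ∈ (univ.erase i) \ E, (1 - q j) ≤ ∏ j ∈ E, q j := by
  have h1 : (0:ℝ) ≤ ∏ j ∈ E, q j := Finset.prod_nonneg fun j _ => hq0 j
  calc (∏ j ∈ E, q j) * ∏ j ∈ (univ.erase i) \ E, (1 - q j)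
      ≤ (∏ j ∈ E, q j) * 1 :=
        mul_le_mul_of_nonneg_left (prod_one_sub_le_one q hq0 hq1 _) h1
    _ = ∏ j ∈ E, q j := mul_one _

lemma prod_le_pow {ε : ℝ} (hε0 : 0 ≤ ε) (hq0 : ∀ j, 0 ≤ q j) (hqe : ∀ j, q j ≤ ε)
    (E : Finset (Fin n)) : ∏ j ∈ E, q j ≤ ε ^ E.card := by
  calc ∏ j ∈ E, q j ≤ ∏ j ∈ E, ε :=
        Finset.prod_le_prod (fun j _ => hq0 j) (fun j _ => hqe j)
    _ = ε ^ E.card := by rw [Finset.prod_const]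

lemma phi_le_bound (d : ℕ) (hd : ∀ x ∈ C, x ≠ 0 → d ≤ wt x) {ε : ℝ}
    (hε0 : 0 ≤ ε) (hε1 : ε ≤ 1) (hq0 : ∀ j, 0 ≤ q j) (hqe : ∀ j, q j ≤ ε) :
    phi C i q ≤ 2 ^ n * ε ^ (d - 1) := by
  have hq1 : ∀ j, q j ≤ 1 := fun j => le_trans (hqe j) hε1
  have key : phi C i q ≤ ∑ _E ∈ (univ.erase i).powerset, ε ^ (d - 1) := by
    apply Finset.sum_le_sum
    intro E hE
    split_ifs with hgood
    · calc (∏ j ∈ E, q j) * ∏ j ∈ (univ.erase i) \ E, (1 - q j)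
          ≤ ∏ j ∈ E, q j := term_le_prod i q hq0 hq1 E
        _ ≤ ε ^ E.card := prod_le_pow q hε0 hq0 hqe E
        _ ≤ ε ^ (d - 1) := pow_le_pow_of_le_one hε0 hε1 (good_card_ge C i hd hgood)
    · positivity
  rw [Finset.sum_const] at key
  have hcard : ((univ.erase i).powerset.card : ℝ) ≤ 2 ^ n := by
    rw [Finset.card_powerset]
    have h1 : (2:ℕ) ^ (univ.erase i).card ≤ 2 ^ n := by
      apply Nat.pow_le_pow_right (by norm_num)
      calc (univ.erase i).card ≤ univ.card := Finset.card_le_card (Finset.erase_subset _ _)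
        _ = n := Finset.card_fin n
    exact_mod_cast h1
  calc phi C i q ≤ (univ.erase i).powerset.card • ε ^ (d - 1) := key
    _ = ((univ.erase i).powerset.card : ℝ) * ε ^ (d - 1) := nsmul_eq_mul _ _
    _ ≤ 2 ^ n * ε ^ (d - 1) := by
        apply mul_le_mul_of_nonneg_right hcard (by positivity)

lemma phi_ge_count (d : ℕ) {ε : ℝ} (hε0 : 0 ≤ ε) (hε1 : ε ≤ 1) :
    ({x | x ∈ C ∧ x i = 1 ∧ wt x = d}.ncard : ℝ) * (ε ^ (d - 1) * (1 - ε) ^ n)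
      ≤ phi C i (fun _ => ε) := by
  set A : Finset (Fin n → ZMod 2) :=
    Finset.univ.filter (fun x => x ∈ C ∧ x i = 1 ∧ wt x = d) with hA
  have hncard : {x | x ∈ C ∧ x i = 1 ∧ wt x = d}.ncard = A.card := by
    have hset : {x | x ∈ C ∧ x i = 1 ∧ wt x = d} = (↑A : Set (Fin n → ZMod 2)) := by
      ext x; simp [hA]
    rw [hset, Set.ncard_coe_finset]
  set f : (Fin n → ZMod 2) → Finset (Fin n) := fun x => (suppF x).erase i with hf
  have hinj : ∀ x ∈ A, ∀ y ∈ A, f x = f y → x = y := by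
    intro x hx y hy hxy
    simp only [hA, Finset.mem_filter] at hx hy
    have hix : i ∈ suppF x := by simp [suppF, hx.2.2.1]
    have hiy : i ∈ suppF y := by simp [suppF, hy.2.2.1]
    have hxy' : (suppF x).erase i = (suppF y).erase i := hxy
    apply eq_of_suppF_eq
    rw [← Finset.insert_erase hix, ← Finset.insert_erase hiy, hxy']
  have hmemE : ∀ x ∈ A, f x ∈ (univ.erase i).powerset := by
    intro x _
    rw [Finset.mem_powerset]
    exact Finset.erase_subset_erase i (Finset.subset_univ _)
  have hterm : ∀ x ∈ A,
      ε ^ (d - 1) * (1 - ε) ^ n ≤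
      (if ∃ y ∈ C, y i = 1 ∧ univ.filter (fun j => y j ≠ 0) ⊆ insert i (f x)
       then (∏ _j ∈ f x, ε) * ∏ _j ∈ (univ.erase i) \ f x, (1 - ε)
       else 0) := by
    intro x hx
    simp only [hA, Finset.mem_filter] at hx
    have hix : i ∈ suppF x := by simp [suppF, hx.2.2.1]
    have hins : insert i (f x) = suppF x := Finset.insert_erase hix
    have hgood : ∃ y ∈ C, y i = 1 ∧ univ.filter (fun j => y j ≠ 0) ⊆ insert i (f x) := by
      refine ⟨x, hx.2.1, hx.2.2.1, ?_⟩
      rw [hins]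
      exact Finset.Subset.refl _
    rw [if_pos hgood, Finset.prod_const, Finset.prod_const]
    have hcardf : (f x).card = d - 1 := by
      rw [hf]
      simp only
      rw [Finset.card_erase_of_mem hix, ← wt_eq_card_suppF, hx.2.2.2]
    rw [hcardf]
    apply mul_le_mul_of_nonneg_left _ (by positivity)
    apply pow_le_pow_of_le_one (by linarith) (by linarith)
    calc ((univ.erase i) \ f x).card ≤ univ.card := Finset.card_le_card (Finset.subset_univ _)
      _ = n := Finset.card_fin n
  set F : Finset (Fin n) → ℝ := fun E =>
    if ∃ x ∈ C, x i = 1 ∧ univ.filter (fun j => x j ≠ 0) ⊆ insert i E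
    then (∏ j ∈ E, (fun _ : Fin n => ε) j) * ∏ j ∈ (univ.erase i) \ E, (1 - (fun _ : Fin n => ε) j)
    else 0 with hF
  have hphi : phi C i (fun _ => ε) = ∑ E ∈ (univ.erase i).powerset, F E := rfl
  have hFnn : ∀ E ∈ (univ.erase i).powerset, E ∉ A.image f → 0 ≤ F E := by
    intro E _ _
    rw [hF]
    simp only
    split_ifs
    · exact mul_nonneg (Finset.prod_nonneg fun j _ => hε0)
        (Finset.prod_nonneg fun j _ => by show (0:ℝ) ≤ 1 - ε; linarith)
    · exact le_refl 0
  have k1 : ∑ E ∈ A.image f, F E ≤ ∑ E ∈ (univ.erase i).powerset, F E := by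
    apply Finset.sum_le_sum_of_subset_of_nonneg _ hFnn
    intro E hE
    obtain ⟨x, hx, rfl⟩ := Finset.mem_image.mp hE
    exact hmemE x hx
  have k2 : ∑ E ∈ A.image f, F E = ∑ x ∈ A, F (f x) := Finset.sum_image hinj
  have k3 : ∀ x ∈ A, ε ^ (d - 1) * (1 - ε) ^ n ≤ F (f x) := by
    intro x hx
    rw [hF]
    exact hterm x hx
  have k4 : (A.card : ℝ) * (ε ^ (d - 1) * (1 - ε) ^ n) ≤ ∑ x ∈ A, F (f x) := by
    calc (A.card : ℝ) * (ε ^ (d - 1) * (1 - ε) ^ n)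
        = ∑ _x ∈ A, (ε ^ (d - 1) * (1 - ε) ^ n) := by rw [Finset.sum_const, nsmul_eq_mul]
      _ ≤ ∑ x ∈ A, F (f x) := Finset.sum_le_sum k3
  rw [hncard, hphi]
  calc (A.card : ℝ) * (ε ^ (d - 1) * (1 - ε) ^ n)
      ≤ ∑ x ∈ A, F (f x) := k4
    _ = ∑ E ∈ A.image f, F E := k2.symm
    _ ≤ ∑ E ∈ (univ.erase i).powerset, F E := k1

lemma phi_le_h (d nab : ℕ) (hd2 : 2 ≤ d) (hd : ∀ x ∈ C, x ≠ 0 → d ≤ wt x) (hi : nab ≤ i.1)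
    {ε δ : ℝ} (hε0 : 0 ≤ ε) (hε1 : ε ≤ 1) (hδ0 : 0 ≤ δ)
    (hq0 : ∀ j, 0 ≤ q j) (hqe : ∀ j, q j ≤ ε) (hqδ : ∀ j : Fin n, j.1 < nab → q j ≤ δ) :
    phi C i q ≤ ({x | x ∈ C ∧ x i = 1 ∧ wt x = d ∧ ∀ j : Fin n, x j ≠ 0 → nab ≤ (j:ℕ)}.ncard : ℝ)
        * ε ^ (d - 1) + 2 ^ n * (ε ^ d + δ * ε ^ (d - 2)) := by
  have hq1 : ∀ j, q j ≤ 1 := fun j => le_trans (hqe j) hε1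
  set P : Finset (Fin n) → Prop := fun E =>
    (∃ x ∈ C, x i = 1 ∧ univ.filter (fun j => x j ≠ 0) ⊆ insert i E) ∧
    E.card = d - 1 ∧ ∀ k ∈ E, nab ≤ k.1 with hP
  have step1 : phi C i q ≤ ∑ E ∈ (univ.erase i).powerset,
      (if P E then ε ^ (d - 1) else ε ^ d + δ * ε ^ (d - 2)) := by
    apply Finset.sum_le_sum
    intro E hE
    split_ifs with hgood hPE hPE
    · -- good and P E
      calc (∏ j ∈ E, q j) * ∏ j ∈ (univ.erase i) \ E, (1 - q j)
          ≤ ∏ j ∈ E, q j := term_le_prod i q hq0 hq1 E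
        _ ≤ ε ^ E.card := prod_le_pow q hε0 hq0 hqe E
        _ = ε ^ (d - 1) := by rw [hPE.2.1]
    · -- good but not P E
      have hcard : d - 1 ≤ E.card := good_card_ge C i hd hgood
      have hbase : (∏ j ∈ E, q j) * ∏ j ∈ (univ.erase i) \ E, (1 - q j) ≤ ∏ j ∈ E, q j :=
        term_le_prod i q hq0 hq1 E
      by_cases hc : E.card = d - 1
      · -- some k ∈ E with k < nab
        have hk : ∃ k ∈ E, k.1 < nab := by
          by_contra hno
          push_neg at hno
          exact hPE ⟨hgood, hc, fun k hkE => hno k hkE⟩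
        obtain ⟨k, hkE, hknab⟩ := hk
        have hsplit : ∏ j ∈ E, q j = q k * ∏ j ∈ E.erase k, q j :=
          (Finset.mul_prod_erase E q hkE).symm
        have h2 : ∏ j ∈ E.erase k, q j ≤ ε ^ (d - 2) := by
          calc ∏ j ∈ E.erase k, q j ≤ ε ^ (E.erase k).card := prod_le_pow q hε0 hq0 hqe _
            _ ≤ ε ^ (d - 2) := by
                apply pow_le_pow_of_le_one hε0 hε1
                rw [Finset.card_erase_of_mem hkE, hc]
                omega
        have : ∏ j ∈ E, q j ≤ δ * ε ^ (d - 2) := by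
          rw [hsplit]
          exact mul_le_mul (hqδ k hknab) h2 (Finset.prod_nonneg fun j _ => hq0 j) hδ0
        have hεd : (0:ℝ) ≤ ε ^ d := by positivity
        linarith
      · -- card ≥ d
        have hcd : d ≤ E.card := by omega
        have : ∏ j ∈ E, q j ≤ ε ^ d := by
          calc ∏ j ∈ E, q j ≤ ε ^ E.card := prod_le_pow q hε0 hq0 hqe E
            _ ≤ ε ^ d := pow_le_pow_of_le_one hε0 hε1 hcd
        have hδε : (0:ℝ) ≤ δ * ε ^ (d - 2) := by positivity
        linarith
    · positivity
    · positivity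
  -- split the if-sum
  rw [Finset.sum_ite] at step1
  rw [Finset.sum_const, Finset.sum_const] at step1
  -- bound each part
  have hcount : (((univ.erase i).powerset.filter P).card : ℝ)
      ≤ ({x | x ∈ C ∧ x i = 1 ∧ wt x = d ∧ ∀ j : Fin n, x j ≠ 0 → nab ≤ (j:ℕ)}.ncard : ℝ) := by
    have hset : {x | x ∈ C ∧ x i = 1 ∧ wt x = d ∧ ∀ j : Fin n, x j ≠ 0 → nab ≤ (j:ℕ)}
        = (↑(Finset.univ.filter (fun x : Fin n → ZMod 2 =>
          x ∈ C ∧ x i = 1 ∧ wt x = d ∧ ∀ j : Fin n, x j ≠ 0 → nab ≤ (j:ℕ)))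
          : Set (Fin n → ZMod 2)) := by
      ext x; simp
    rw [hset, Set.ncard_coe_finset]
    have hle : ((univ.erase i).powerset.filter P).card ≤
        (Finset.univ.filter (fun x : Fin n → ZMod 2 =>
          x ∈ C ∧ x i = 1 ∧ wt x = d ∧ ∀ j : Fin n, x j ≠ 0 → nab ≤ (j:ℕ))).card := by
      apply Finset.card_le_card_of_injOn
        (fun E => (fun j => if j ∈ insert i E then (1 : ZMod 2) else 0))
      · intro E hE
        simp only [Finset.mem_coe, Finset.mem_filter, Finset.mem_powerset] at hE
        obtain ⟨hEsub, ⟨x, hxC, hxi, hxsub⟩, hEcard, hEnab⟩ := hE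
        have hiE : i ∉ E := fun hc => (Finset.mem_erase.mp (hEsub hc)).1 rfl
        have hcardins : (insert i E).card = d := by
          rw [Finset.card_insert_of_notMem hiE, hEcard]
          omega
        have hwt : d ≤ wt x := hd x hxC (ne_zero_of_coord_one hxi)
        have hsuppeq : univ.filter (fun j => x j ≠ 0) = insert i E := by
          apply Finset.eq_of_subset_of_card_le hxsub
          rw [hcardins]
          exact hwt
        have hxeq : (fun j => if j ∈ insert i E then (1 : ZMod 2) else 0) = x := by
          funext j
          by_cases hj : j ∈ insert i E
          · rw [if_pos hj]
            rw [← hsuppeq] at hj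
            simp only [Finset.mem_filter] at hj
            exact (zmod2_eq_one hj.2).symm
          · rw [if_neg hj]
            rw [← hsuppeq] at hj
            simp only [Finset.mem_filter, Finset.mem_univ, true_and] at hj
            push_neg at hj
            exact hj.symm
        beta_reduce
        rw [hxeq]
        simp only [Finset.mem_coe, Finset.mem_filter, Finset.mem_univ, true_and]
        refine ⟨hxC, hxi, ?_, ?_⟩
        · rw [wt_eq_card_suppF]
          show (univ.filter (fun j => x j ≠ 0)).card = d
          rw [hsuppeq, hcardins]
        · intro j hj
          have : j ∈ insert i E := by
            rw [← hsuppeq]; simp [hj]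
          rcases Finset.mem_insert.mp this with h' | h'
          · rw [h']; exact hi
          · exact hEnab j h'
      · intro E1 hE1 E2 hE2 heq
        simp only [Finset.coe_filter, Set.mem_setOf_eq, Finset.mem_powerset] at hE1 hE2
        have hiE1 : i ∉ E1 := fun hc => (Finset.mem_erase.mp (hE1.1 hc)).1 rfl
        have hiE2 : i ∉ E2 := fun hc => (Finset.mem_erase.mp (hE2.1 hc)).1 rfl
        have hmem : ∀ (E : Finset (Fin n)) (j : Fin n),
            (if j ∈ insert i E then (1:ZMod 2) else 0) ≠ 0 ↔ j ∈ insert i E := by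
          intro E j
          by_cases hj : j ∈ insert i E <;> simp [hj]
        have hins : insert i E1 = insert i E2 := by
          ext j
          rw [← hmem E1 j, ← hmem E2 j,
            show (if j ∈ insert i E1 then (1:ZMod 2) else 0)
              = (if j ∈ insert i E2 then (1:ZMod 2) else 0) from congrFun heq j]
        calc E1 = (insert i E1).erase i := (Finset.erase_insert hiE1).symm
          _ = (insert i E2).erase i := by rw [hins]
          _ = E2 := Finset.erase_insert hiE2
    exact_mod_cast hle
  have hcount2 : (((univ.erase i).powerset.filter (fun E => ¬ P E)).card : ℝ) ≤ 2 ^ n := by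
    have h1 : ((univ.erase i).powerset.filter (fun E => ¬ P E)).card ≤
        (univ.erase i).powerset.card := Finset.card_filter_le _ _
    have h2 : (univ.erase i).powerset.card ≤ 2 ^ n := by
      rw [Finset.card_powerset]
      apply Nat.pow_le_pow_right (by norm_num)
      calc (univ.erase i).card ≤ univ.card := Finset.card_le_card (Finset.erase_subset _ _)
        _ = n := Finset.card_fin n
    exact_mod_cast le_trans h1 h2
  calc phi C i q ≤ ((univ.erase i).powerset.filter P).card • ε ^ (d - 1)
        + ((univ.erase i).powerset.filter (fun E => ¬ P E)).card • (ε ^ d + δ * ε ^ (d - 2)) :=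
        step1
    _ = (((univ.erase i).powerset.filter P).card : ℝ) * ε ^ (d - 1)
        + (((univ.erase i).powerset.filter (fun E => ¬ P E)).card : ℝ)
          * (ε ^ d + δ * ε ^ (d - 2)) := by rw [nsmul_eq_mul, nsmul_eq_mul]
    _ ≤ ({x | x ∈ C ∧ x i = 1 ∧ wt x = d ∧ ∀ j : Fin n, x j ≠ 0 → nab ≤ (j:ℕ)}.ncard : ℝ)
          * ε ^ (d - 1) + 2 ^ n * (ε ^ d + δ * ε ^ (d - 2)) := by
        apply add_le_add
        · exact mul_le_mul_of_nonneg_right hcount (by positivity)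
        · exact mul_le_mul_of_nonneg_right hcount2 (by positivity)

end phiLemmas

lemma sum_Ico_eq_sum_filter (f : ℕ → ℝ) (a n : ℕ) :
    ∑ k ∈ Finset.Ico a n, f k
      = ∑ i ∈ univ.filter (fun i : Fin n => a ≤ (i : ℕ)), f i.1 := by
  have himg : (univ.filter (fun i : Fin n => a ≤ (i : ℕ))).image Fin.val = Finset.Ico a n := by
    ext k
    simp only [Finset.mem_image, Finset.mem_filter, Finset.mem_univ, true_and, Finset.mem_Ico]
    constructor
    · rintro ⟨x, hx, rfl⟩; exact ⟨hx, x.2⟩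
    · rintro ⟨h1, h2⟩; exact ⟨⟨k, h2⟩, h1, rfl⟩
  rw [← himg, Finset.sum_image (fun x _ y _ h => Fin.val_injective h)]

/-- under the layered BEC schedule, if the subcode `C_a` has strictly smaller
minimum distance than `C_b` (both with every coordinate touching a minimum-weight codeword),
and the count condition `Σ (g_a(i) - h_a(i)) > 0` holds, then updating `b` first gives a
strictly smaller total erasure probability for all sufficiently small channel erasure
probability `ε`. -/
theorem schedule_smaller_dmin_first
    (na nb nab : ℕ) (hna : nab ≤ na) (hnb : nab ≤ nb)
    (Ca : Submodule (ZMod 2) (Fin na → ZMod 2))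
    (Cb : Submodule (ZMod 2) (Fin nb → ZMod 2))
    (da db : ℕ) (hda2 : 2 ≤ da) (hdb2 : 2 ≤ db)
    -- `C_a` has minimum distance `d_a`, and every coordinate lies on a weight-`d_a` codeword
    (hCa_dist : ∀ x ∈ Ca, x ≠ 0 → da ≤ wt x)
    (hCa_min : ∀ i : Fin na, ∃ x ∈ Ca, x i = 1 ∧ wt x = da)
    -- `C_b` has minimum distance `d_b`, and every coordinate lies on a weight-`d_b` codeword
    (hCb_dist : ∀ x ∈ Cb, x ≠ 0 → db ≤ wt x)
    (hCb_min : ∀ j : Fin nb, ∃ x ∈ Cb, x j = 1 ∧ wt x = db)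
    -- schedule (a, b): update `a` first, then `b`
    (Pa : ℝ → ℕ → ℝ) (hPa : ∀ ε k, Pa ε k = phiNat Ca k (fun _ => ε))
    (qab : ℝ → ℕ → ℝ)
    (hqab : ∀ ε k, qab ε k = if k < nab then ε * Pa ε k else ε)
    (Pb : ℝ → ℕ → ℝ) (hPb : ∀ ε j, Pb ε j = phiNat Cb j (qab ε))
    (Pab : ℝ → ℝ)
    (hPab : ∀ ε, Pab ε = (∑ k ∈ Finset.range nab, ε * Pa ε k * Pb ε k)
      + (∑ i ∈ Finset.Ico nab na, ε * Pa ε i)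
      + (∑ j ∈ Finset.Ico nab nb, ε * Pb ε j))
    -- schedule (b, a): update `b` first, then `a`
    (Pb0 : ℝ → ℕ → ℝ) (hPb0 : ∀ ε j, Pb0 ε j = phiNat Cb j (fun _ => ε))
    (qba : ℝ → ℕ → ℝ)
    (hqba : ∀ ε k, qba ε k = if k < nab then ε * Pb0 ε k else ε)
    (Pa' : ℝ → ℕ → ℝ) (hPa' : ∀ ε i, Pa' ε i = phiNat Ca i (qba ε))
    (Pba : ℝ → ℝ)
    (hPba : ∀ ε, Pba ε = (∑ k ∈ Finset.range nab, ε * Pb0 ε k * Pa' ε k)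
      + (∑ j ∈ Finset.Ico nab nb, ε * Pb0 ε j)
      + (∑ i ∈ Finset.Ico nab na, ε * Pa' ε i))
    -- the codeword counts `g_a(i)` and `h_a(i)`
    (g h : Fin na → ℕ)
    (hg : ∀ i, g i = {x : Fin na → ZMod 2 | x ∈ Ca ∧ x i = 1 ∧ wt x = da}.ncard)
    (hh : ∀ i, h i = {x : Fin na → ZMod 2 | x ∈ Ca ∧ x i = 1 ∧ wt x = da ∧
      ∀ j : Fin na, x j ≠ 0 → nab ≤ (j : ℕ)}.ncard)
    -- Condition 1 of the theorem
    (hdadb : da < db)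
    (hgh : 0 < ∑ i ∈ univ.filter (fun i : Fin na => nab ≤ (i : ℕ)), ((g i : ℤ) - (h i : ℤ))) :
    ∃ ε₀ > 0, ∀ ε : ℝ, 0 < ε → ε < ε₀ → Pba ε < Pab ε := by
  set Sg : ℝ := ∑ i ∈ univ.filter (fun i : Fin na => nab ≤ (i : ℕ)), (g i : ℝ) with hSg
  set Sh : ℝ := ∑ i ∈ univ.filter (fun i : Fin na => nab ≤ (i : ℕ)), (h i : ℝ) with hSh
  have hSg0 : 0 ≤ Sg := Finset.sum_nonneg fun i _ => Nat.cast_nonneg _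
  have hD : 1 ≤ Sg - Sh := by
    have h1 : (0:ℤ) + 1 ≤ ∑ i ∈ univ.filter (fun i : Fin na => nab ≤ (i : ℕ)),
        ((g i : ℤ) - (h i : ℤ)) := Int.add_one_le_iff.mpr hgh
    rw [zero_add] at h1
    have h2 : ((1:ℤ):ℝ) ≤ ((∑ i ∈ univ.filter (fun i : Fin na => nab ≤ (i : ℕ)),
        ((g i : ℤ) - (h i : ℤ)) : ℤ) : ℝ) := by exact_mod_cast h1
    push_cast at h2
    rw [Finset.sum_sub_distrib] at h2
    rw [hSg, hSh]
    linarith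
  set K : ℝ := Sg * na + nab * 2^nb + nb * 2^nb + na * (2^na * (1 + 2^nb)) with hK
  have hK0 : 0 ≤ K := by
    have h1 : (0:ℝ) ≤ Sg * na := mul_nonneg hSg0 (Nat.cast_nonneg _)
    have h2 : (0:ℝ) ≤ (nab:ℝ) * 2^nb := by positivity
    have h3 : (0:ℝ) ≤ (nb:ℝ) * 2^nb := by positivity
    have h4 : (0:ℝ) ≤ (na:ℝ) * (2^na * (1+2^nb)) := by positivity
    rw [hK]; linarith
  have main : ∀ ε : ℝ, 0 < ε → ε < 1 →
      (Sg - Sh) * ε^da - K * (ε^da * ε) ≤ Pab ε - Pba ε := by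
    intro ε hε hε1
    have he0 : (0:ℝ) ≤ ε := le_of_lt hε
    have he1 : ε ≤ 1 := le_of_lt hε1
    -- basic [0,1] bounds
    have hPa01 : ∀ k, 0 ≤ Pa ε k ∧ Pa ε k ≤ 1 := by
      intro k; rw [hPa]; unfold phiNat; split_ifs with hk
      · exact ⟨phi_nonneg _ _ _ (fun _ => he0) (fun _ => he1),
          phi_le_one _ _ _ (fun _ => he0) (fun _ => he1)⟩
      · exact ⟨le_refl 0, zero_le_one⟩
    have hPb001 : ∀ k, 0 ≤ Pb0 ε k ∧ Pb0 ε k ≤ 1 := by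
      intro k; rw [hPb0]; unfold phiNat; split_ifs with hk
      · exact ⟨phi_nonneg _ _ _ (fun _ => he0) (fun _ => he1),
          phi_le_one _ _ _ (fun _ => he0) (fun _ => he1)⟩
      · exact ⟨le_refl 0, zero_le_one⟩
    have hqab01 : ∀ m, 0 ≤ qab ε m ∧ qab ε m ≤ 1 := by
      intro m; rw [hqab]; split_ifs with hm
      · obtain ⟨ha, hb⟩ := hPa01 m
        constructor
        · exact mul_nonneg he0 ha
        · nlinarith
      · exact ⟨he0, he1⟩
    have hqba01 : ∀ m, 0 ≤ qba ε m ∧ qba ε m ≤ 1 := by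
      intro m; rw [hqba]; split_ifs with hm
      · obtain ⟨ha, hb⟩ := hPb001 m
        constructor
        · exact mul_nonneg he0 ha
        · nlinarith
      · exact ⟨he0, he1⟩
    have hPb01 : ∀ k, 0 ≤ Pb ε k ∧ Pb ε k ≤ 1 := by
      intro k; rw [hPb]; unfold phiNat; split_ifs with hk
      · exact ⟨phi_nonneg _ _ _ (fun j => (hqab01 j.1).1) (fun j => (hqab01 j.1).2),
          phi_le_one _ _ _ (fun j => (hqab01 j.1).1) (fun j => (hqab01 j.1).2)⟩
      · exact ⟨le_refl 0, zero_le_one⟩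
    have hPa'01 : ∀ k, 0 ≤ Pa' ε k ∧ Pa' ε k ≤ 1 := by
      intro k; rw [hPa']; unfold phiNat; split_ifs with hk
      · exact ⟨phi_nonneg _ _ _ (fun j => (hqba01 j.1).1) (fun j => (hqba01 j.1).2),
          phi_le_one _ _ _ (fun j => (hqba01 j.1).1) (fun j => (hqba01 j.1).2)⟩
      · exact ⟨le_refl 0, zero_le_one⟩
    have hPb0le : ∀ m, m < nb → Pb0 ε m ≤ 2^nb * ε^(db-1) := by
      intro m hm
      rw [hPb0]; unfold phiNat; rw [dif_pos hm]
      exact phi_le_bound _ _ _ db hCb_dist he0 he1 (fun _ => he0) (fun _ => le_refl ε)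
    -- qba bounds
    have hqbae : ∀ m, qba ε m ≤ ε := by
      intro m; rw [hqba]; split_ifs with hm
      · obtain ⟨ha, hb⟩ := hPb001 m
        nlinarith
      · exact le_refl ε
    have hqbaδ : ∀ m, m < nab → qba ε m ≤ ε * (2^nb * ε^(db-1)) := by
      intro m hm
      rw [hqba, if_pos hm]
      exact mul_le_mul_of_nonneg_left (hPb0le m (lt_of_lt_of_le hm hnb)) he0
    -- Bernoulli
    have hBern : 1 - (na:ℝ) * ε ≤ (1 - ε)^na := by
      have h0 := one_add_mul_le_pow (by linarith : (-2:ℝ) ≤ -ε) na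
      have he : (1 + -ε : ℝ) = 1 - ε := by ring
      rw [he] at h0
      linarith
    -- lower bound for Pab
    set GA : ℕ → ℝ := fun k => if hk : k < na then (g ⟨k, hk⟩ : ℝ) else 0 with hGA
    have hGAsum : ∑ k ∈ Finset.Ico nab na, GA k = Sg := by
      rw [sum_Ico_eq_sum_filter GA nab na, hSg]
      apply Finset.sum_congr rfl
      intro i _
      rw [hGA]
      exact dif_pos i.isLt
    have hPabLB : Sg * (ε ^ da * (1 - ε) ^ na) ≤ Pab ε := by
      rw [hPab ε]
      have t1 : 0 ≤ ∑ k ∈ Finset.range nab, ε * Pa ε k * Pb ε k :=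
        Finset.sum_nonneg fun k _ =>
          mul_nonneg (mul_nonneg he0 (hPa01 k).1) (hPb01 k).1
      have t3 : 0 ≤ ∑ j ∈ Finset.Ico nab nb, ε * Pb ε j :=
        Finset.sum_nonneg fun j _ => mul_nonneg he0 (hPb01 j).1
      have t2 : Sg * (ε ^ da * (1 - ε) ^ na) ≤ ∑ i ∈ Finset.Ico nab na, ε * Pa ε i := by
        have hsum : ∑ k ∈ Finset.Ico nab na, GA k * (ε^da * (1-ε)^na)
            = Sg * (ε^da * (1-ε)^na) := by
          rw [← Finset.sum_mul, hGAsum]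
        rw [← hsum]
        apply Finset.sum_le_sum
        intro k hk
        obtain ⟨hk1, hk2⟩ := Finset.mem_Ico.mp hk
        rw [hPa]
        unfold phiNat
        rw [dif_pos hk2]
        have hphi := phi_ge_count Ca ⟨k, hk2⟩ da he0 he1
        rw [← hg ⟨k, hk2⟩] at hphi
        have hphi2 := mul_le_mul_of_nonneg_left hphi he0
        have hpow1 : ε^(da-1) * ε = ε^da := by
          rw [← pow_succ]
          congr 1
          omega
        have heq : GA k * (ε^da * (1-ε)^na)
            = ε * ((g ⟨k, hk2⟩ : ℝ) * (ε^(da-1) * (1-ε)^na)) := by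
          rw [hGA]
          simp only
          rw [dif_pos hk2, ← hpow1]
          ring
        rw [heq]
        exact hphi2
      linarith
    have hPab2 : Sg * ε^da - Sg * (na:ℝ) * (ε^da * ε) ≤ Pab ε := by
      have h1 : Sg * (ε^da * (1 - (na:ℝ)*ε)) ≤ Sg * (ε^da * (1-ε)^na) := by
        apply mul_le_mul_of_nonneg_left _ hSg0
        exact mul_le_mul_of_nonneg_left hBern (by positivity)
      calc Sg * ε^da - Sg * (na:ℝ) * (ε^da * ε) = Sg * (ε^da * (1 - (na:ℝ)*ε)) := by ring
        _ ≤ Sg * (ε^da * (1-ε)^na) := h1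
        _ ≤ Pab ε := hPabLB
    -- upper bounds for Pba pieces
    have hpowdb : ε^(db-1) ≤ ε^da := pow_le_pow_of_le_one he0 he1 (by omega)
    have hT1 : ∑ k ∈ Finset.range nab, ε * Pb0 ε k * Pa' ε k
        ≤ (nab:ℝ) * (2^nb * (ε^da * ε)) := by
      have hper : ∀ k ∈ Finset.range nab, ε * Pb0 ε k * Pa' ε k ≤ 2^nb * (ε^da * ε) := by
        intro k hk
        have hk' : k < nab := Finset.mem_range.mp hk
        have h1 : Pb0 ε k ≤ 2^nb * ε^(db-1) := hPb0le k (lt_of_lt_of_le hk' hnb)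
        have h2 : Pa' ε k ≤ 1 := (hPa'01 k).2
        have h30 : 0 ≤ Pb0 ε k := (hPb001 k).1
        calc ε * Pb0 ε k * Pa' ε k ≤ ε * Pb0 ε k * 1 :=
              mul_le_mul_of_nonneg_left h2 (mul_nonneg he0 h30)
          _ = ε * Pb0 ε k := mul_one _
          _ ≤ ε * (2^nb * ε^(db-1)) := mul_le_mul_of_nonneg_left h1 he0
          _ ≤ ε * (2^nb * ε^da) := by
              apply mul_le_mul_of_nonneg_left _ he0
              exact mul_le_mul_of_nonneg_left hpowdb (by positivity)
          _ = 2^nb * (ε^da * ε) := by ring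
      calc ∑ k ∈ Finset.range nab, ε * Pb0 ε k * Pa' ε k
          ≤ (Finset.range nab).card • (2^nb * (ε^da * ε)) :=
            Finset.sum_le_card_nsmul _ _ _ hper
        _ = (nab:ℝ) * (2^nb * (ε^da * ε)) := by
            rw [Finset.card_range, nsmul_eq_mul]
    have hT2 : ∑ j ∈ Finset.Ico nab nb, ε * Pb0 ε j ≤ (nb:ℝ) * (2^nb * (ε^da * ε)) := by
      have hper : ∀ j ∈ Finset.Ico nab nb, ε * Pb0 ε j ≤ 2^nb * (ε^da * ε) := by
        intro j hj
        obtain ⟨_, hj2⟩ := Finset.mem_Ico.mp hj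
        have h1 : Pb0 ε j ≤ 2^nb * ε^(db-1) := hPb0le j hj2
        calc ε * Pb0 ε j ≤ ε * (2^nb * ε^(db-1)) := mul_le_mul_of_nonneg_left h1 he0
          _ ≤ ε * (2^nb * ε^da) := by
              apply mul_le_mul_of_nonneg_left _ he0
              exact mul_le_mul_of_nonneg_left hpowdb (by positivity)
          _ = 2^nb * (ε^da * ε) := by ring
      calc ∑ j ∈ Finset.Ico nab nb, ε * Pb0 ε j
          ≤ (Finset.Ico nab nb).card • (2^nb * (ε^da * ε)) :=
            Finset.sum_le_card_nsmul _ _ _ hper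
        _ ≤ (nb:ℝ) * (2^nb * (ε^da * ε)) := by
            rw [Nat.card_Ico, nsmul_eq_mul]
            apply mul_le_mul_of_nonneg_right _ (by positivity)
            exact_mod_cast Nat.sub_le nb nab
    set HA : ℕ → ℝ := fun k => if hk : k < na then (h ⟨k, hk⟩ : ℝ) else 0 with hHA
    have hHAsum : ∑ k ∈ Finset.Ico nab na, HA k = Sh := by
      rw [sum_Ico_eq_sum_filter HA nab na, hSh]
      apply Finset.sum_congr rfl
      intro i _
      rw [hHA]
      exact dif_pos i.isLt
    have hT3 : ∑ i ∈ Finset.Ico nab na, ε * Pa' ε i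
        ≤ Sh * ε^da + (na:ℝ) * (2^na * (1+2^nb)) * (ε^da * ε) := by
      have hper : ∀ k ∈ Finset.Ico nab na, ε * Pa' ε k
          ≤ HA k * ε^da + 2^na * (1+2^nb) * (ε^da * ε) := by
        intro k hk
        obtain ⟨hk1, hk2⟩ := Finset.mem_Ico.mp hk
        rw [hPa']
        unfold phiNat
        rw [dif_pos hk2]
        have hδ0 : (0:ℝ) ≤ ε * (2^nb * ε^(db-1)) := by positivity
        have hphi := phi_le_h Ca ⟨k, hk2⟩ (fun j => qba ε j.1) da nab hda2 hCa_dist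
          (by exact hk1) he0 he1 hδ0
          (fun j => (hqba01 j.1).1) (fun j => hqbae j.1) (fun j hj => hqbaδ j.1 hj)
        rw [← hh ⟨k, hk2⟩] at hphi
        have hδd : ε * (2^nb * ε^(db-1)) * ε^(da-2) ≤ 2^nb * ε^da := by
          have hexp : ε * ε^(db-1) * ε^(da-2) = ε^(1 + (db-1) + (da-2)) := by
            rw [pow_add, pow_add, pow_one]
          have hle2 : ε^(1 + (db-1) + (da-2)) ≤ ε^da :=
            pow_le_pow_of_le_one he0 he1 (by omega)
          calc ε * (2^nb * ε^(db-1)) * ε^(da-2) = 2^nb * (ε * ε^(db-1) * ε^(da-2)) := by ring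
            _ = 2^nb * ε^(1+(db-1)+(da-2)) := by rw [hexp]
            _ ≤ 2^nb * ε^da := mul_le_mul_of_nonneg_left hle2 (by positivity)
        have hphi2 : phi Ca ⟨k, hk2⟩ (fun j => qba ε j.1)
            ≤ (h ⟨k, hk2⟩ : ℝ) * ε^(da-1) + 2^na * (ε^da + 2^nb * ε^da) := by
          have hstep : (2:ℝ)^na * (ε^da + ε * (2^nb * ε^(db-1)) * ε^(da-2))
              ≤ 2^na * (ε^da + 2^nb * ε^da) := by
            apply mul_le_mul_of_nonneg_left _ (by positivity)
            linarith
          linarith [hphi, hstep]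
        have hmul := mul_le_mul_of_nonneg_left hphi2 he0
        have heq : ε * ((h ⟨k, hk2⟩ : ℝ) * ε^(da-1) + 2^na * (ε^da + 2^nb * ε^da))
            = HA k * ε^da + 2^na * (1+2^nb) * (ε^da * ε) := by
          have hpow1 : ε^(da-1) * ε = ε^da := by
            rw [← pow_succ]
            congr 1
            omega
          rw [hHA]
          simp only
          rw [dif_pos hk2, ← hpow1]
          ring
        rw [← heq]
        exact hmul
      calc ∑ i ∈ Finset.Ico nab na, ε * Pa' ε i
          ≤ ∑ k ∈ Finset.Ico nab na, (HA k * ε^da + 2^na * (1+2^nb) * (ε^da * ε)) :=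
            Finset.sum_le_sum hper
        _ = (∑ k ∈ Finset.Ico nab na, HA k) * ε^da
            + (Finset.Ico nab na).card * (2^na * (1+2^nb) * (ε^da * ε)) := by
            rw [Finset.sum_add_distrib, ← Finset.sum_mul, Finset.sum_const, nsmul_eq_mul]
        _ ≤ Sh * ε^da + (na:ℝ) * (2^na * (1+2^nb)) * (ε^da * ε) := by
            rw [hHAsum]
            have hcard : ((Finset.Ico nab na).card : ℝ) ≤ (na:ℝ) := by
              rw [Nat.card_Ico]
              exact_mod_cast Nat.sub_le na nab
            have : ((Finset.Ico nab na).card : ℝ) * (2^na * (1+2^nb) * (ε^da * ε))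
                ≤ (na:ℝ) * (2^na * (1+2^nb) * (ε^da * ε)) :=
              mul_le_mul_of_nonneg_right hcard (by positivity)
            nlinarith [this]
    have hPbaUB : Pba ε ≤ Sh * ε^da
        + ((nab:ℝ) * 2^nb + (nb:ℝ) * 2^nb + (na:ℝ) * (2^na * (1+2^nb))) * (ε^da * ε) := by
      rw [hPba ε]
      nlinarith [hT1, hT2, hT3]
    rw [hK]
    nlinarith [hPab2, hPbaUB]
  refine ⟨min 1 (1/(K+1)), lt_min one_pos (by positivity), ?_⟩
  intro ε hε hεlt
  have hε1 : ε < 1 := lt_of_lt_of_le hεlt (min_le_left _ _)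
  have hεK : ε < 1/(K+1) := lt_of_lt_of_le hεlt (min_le_right _ _)
  have hKε : K * ε < 1 := by
    rw [lt_div_iff₀ (by linarith : (0:ℝ) < K+1)] at hεK
    nlinarith
  have hmain := main ε hε hε1
  have hpow : 0 < ε^da := pow_pos hε da
  have f1 : 0 < ε^da * (1 - K*ε) := mul_pos hpow (by linarith)
  have f2 : 0 ≤ (Sg - Sh - 1) * ε^da := mul_nonneg (by linarith) (le_of_lt hpow)
  nlinarith [hmain, f1, f2]
end

section
/- Let C ⊆ F_2^n be a binary linear code, let j be a coordinate such that some codeword has x_j = 1, let d_j be the minimum Hamming weight among codewords of C with x_j = 1, and let S ⊆ {k : k ≠ j} be a set of 'already updated' positions. Suppose q : (0,1) → ([0,1]^{k ≠ j}) assigns erasure probabilities with q_k(ε) = ε for k ∉ S, while for k ∈ S one has q_k(ε)/ε → 0 as ε → 0+. Then lim_{ε → 0+} Φ_{C,j}(q(ε))/ε^{d_j − 1} = h_j, where h_j = #{x ∈ C : x_j = 1, w(x) = d_j, supp(x) ∩ S = ∅}. -/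
open Finset
open scoped Classical

lemma zmod2_ne_zero_iff (a : ZMod 2) : a ≠ 0 ↔ a = 1 := by revert a; decide

/-- if the erasure probabilities at the 'already updated' positions `k ∈ S` are
`o(ε)` while all other positions (besides `j`) have erasure probability exactly `ε`, then
`Φ_{C,j}(q(ε))` is asymptotic to `h_j · ε^(d_j - 1)` as `ε → 0⁺`, where `h_j` counts the
minimum-weight codewords with `x j = 1` whose support avoids `S`. -/
theorem phi_asymptotics_updated (n : ℕ) (C : Submodule (ZMod 2) (Fin n → ZMod 2)) (j : Fin n)
    (d : ℕ)
    (hd_lb : ∀ x ∈ C, x j = 1 → d ≤ wt x)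
    (hd_ex : ∃ x ∈ C, x j = 1 ∧ wt x = d)
    (S : Finset (Fin n)) (hjS : j ∉ S)
    (q : ℝ → Fin n → ℝ)
    (hq_range : ∀ ε ∈ Set.Ioo (0:ℝ) 1, ∀ k, k ≠ j → q ε k ∈ Set.Icc (0:ℝ) 1)
    (hq_out : ∀ ε ∈ Set.Ioo (0:ℝ) 1, ∀ k, k ≠ j → k ∉ S → q ε k = ε)
    (hq_in : ∀ k ∈ S,
      Filter.Tendsto (fun ε : ℝ => q ε k / ε) (nhdsWithin 0 (Set.Ioi 0)) (nhds 0))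
    (h : ℕ)
    (hh : h = {x : Fin n → ZMod 2 | x ∈ C ∧ x j = 1 ∧ wt x = d ∧ ∀ k ∈ S, x k = 0}.ncard) :
    Filter.Tendsto (fun ε : ℝ => phi C j (q ε) / ε ^ (d - 1))
      (nhdsWithin 0 (Set.Ioi 0)) (nhds (h : ℝ)) := by
  have hd1 : 1 ≤ d := by
    obtain ⟨x, hxC, hxj, hxw⟩ := hd_ex
    have : j ∈ univ.filter (fun k => x k ≠ 0) := by
      simp [hxj]
    have : 0 < wt x := Finset.card_pos.2 ⟨j, this⟩
    clear hh; omega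
  set F := nhdsWithin (0:ℝ) (Set.Ioi 0) with hF
  set D := (univ : Finset (Fin n)).erase j with hD
  set P : Finset (Fin n) → Prop := fun E =>
    ∃ x ∈ C, x j = 1 ∧ univ.filter (fun k => x k ≠ 0) ⊆ insert j E with hPdef
  set L : Finset (Fin n) → ℝ := fun E =>
    if P E ∧ (∀ k ∈ E, k ∉ S) ∧ E.card = d - 1 then 1 else 0 with hLdef
  -- basic eventual facts
  have hIoo : ∀ᶠ ε in F, ε ∈ Set.Ioo (0:ℝ) 1 := by
    have h1 : ∀ᶠ ε in F, ε ∈ Set.Ioi (0:ℝ) := eventually_mem_nhdsWithin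
    have h2 : ∀ᶠ ε in F, ε < 1 :=
      Filter.Eventually.filter_mono nhdsWithin_le_nhds (eventually_lt_nhds (by norm_num))
    filter_upwards [h1, h2] with ε hε1 hε2
    exact ⟨hε1, hε2⟩
  have hε0 : Filter.Tendsto (fun ε : ℝ => ε) F (nhds 0) :=
    Filter.tendsto_id.mono_right nhdsWithin_le_nhds
  have hqr : ∀ k, k ≠ j → Filter.Tendsto (fun ε => q ε k / ε) F
      (nhds (if k ∈ S then 0 else 1)) := by
    intro k hk
    by_cases hkS : k ∈ S
    · simpa [hkS] using hq_in k hkS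
    · rw [if_neg hkS]
      refine Filter.Tendsto.congr' ?_ (tendsto_const_nhds (x := (1:ℝ)))
      filter_upwards [hIoo] with ε hε
      rw [hq_out ε hε k hk hkS, div_self (ne_of_gt hε.1)]
  have hq0 : ∀ k, k ≠ j → Filter.Tendsto (fun ε => q ε k) F (nhds 0) := by
    intro k hk
    have h1 := (hqr k hk).mul hε0
    rw [mul_zero] at h1
    refine h1.congr' ?_
    filter_upwards [hIoo] with ε hε
    rw [div_mul_cancel₀ _ (ne_of_gt hε.1)]
  -- rewrite the function as a sum of terms
  have hfun : ∀ ε : ℝ, phi C j (q ε) / ε ^ (d - 1) =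
      ∑ E ∈ D.powerset,
        (if P E then (∏ k ∈ E, q ε k) * ∏ k ∈ D \ E, (1 - q ε k) else 0) / ε ^ (d - 1) := by
    intro ε
    rw [phi, Finset.sum_div]
  -- termwise limits
  have hterm : ∀ E ∈ D.powerset, Filter.Tendsto
      (fun ε : ℝ =>
        (if P E then (∏ k ∈ E, q ε k) * ∏ k ∈ D \ E, (1 - q ε k) else 0) / ε ^ (d - 1))
      F (nhds (L E)) := by
    intro E hE
    rw [Finset.mem_powerset] at hE
    by_cases hPE : P E
    · have hkj : ∀ k ∈ E, k ≠ j := fun k hk => (Finset.mem_erase.1 (hE hk)).1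
      have hjE : j ∉ E := fun hmem => (Finset.mem_erase.1 (hE hmem)).1 rfl
      obtain ⟨x, hxC, hxj, hsupp⟩ := hPE
      have hwt : d ≤ wt x := hd_lb x hxC hxj
      have hcard : wt x ≤ E.card + 1 := by
        have h1 : (univ.filter (fun k => x k ≠ 0)).card ≤ (insert j E).card :=
          Finset.card_le_card hsupp
        rwa [Finset.card_insert_of_notMem hjE] at h1
      have hle : d - 1 ≤ E.card := by clear hh; omega
      have hA : Filter.Tendsto (fun ε => ∏ k ∈ E, (q ε k / ε)) F
          (nhds (∏ k ∈ E, (if k ∈ S then (0:ℝ) else 1))) :=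
        tendsto_finset_prod _ (fun k hk => hqr k (hkj k hk))
      have hB : Filter.Tendsto (fun ε : ℝ => ε ^ (E.card - (d - 1))) F
          (nhds ((0:ℝ) ^ (E.card - (d - 1)))) := hε0.pow _
      have hC : Filter.Tendsto (fun ε => ∏ k ∈ D \ E, (1 - q ε k)) F
          (nhds (∏ _k ∈ D \ E, (1:ℝ))) := by
        refine tendsto_finset_prod _ (fun k hk => ?_)
        have hkj' : k ≠ j := (Finset.mem_erase.1 (Finset.mem_sdiff.1 hk).1).1
        simpa using tendsto_const_nhds.sub (hq0 k hkj')
      have hABC := (hA.mul hB).mul hC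
      have hval : (∏ k ∈ E, (if k ∈ S then (0:ℝ) else 1)) * (0:ℝ) ^ (E.card - (d - 1)) *
          (∏ _k ∈ D \ E, (1:ℝ)) = L E := by
        rw [hLdef]
        simp only [Finset.prod_const_one, mul_one]
        by_cases hES : ∀ k ∈ E, k ∉ S
        · have hprod : (∏ k ∈ E, (if k ∈ S then (0:ℝ) else 1)) = 1 :=
            Finset.prod_eq_one (fun k hk => if_neg (hES k hk))
          rw [hprod, one_mul]
          by_cases hcd : E.card = d - 1
          · rw [if_pos ⟨⟨x, hxC, hxj, hsupp⟩, hES, hcd⟩, hcd]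
            simp
          · rw [if_neg (fun hc => hcd hc.2.2)]
            have : E.card - (d - 1) ≠ 0 := by clear hh; omega
            simp [zero_pow this]
        · push_neg at hES
          obtain ⟨k, hkE, hkS⟩ := hES
          rw [Finset.prod_eq_zero (f := fun k => if k ∈ S then (0:ℝ) else 1) hkE
            (if_pos hkS), zero_mul, if_neg (fun hc => (hc.2.1 k hkE) hkS)]
      rw [hval] at hABC
      refine hABC.congr' ?_
      filter_upwards [hIoo] with ε hε
      have hεne : ε ≠ 0 := ne_of_gt hε.1
      rw [if_pos ⟨x, hxC, hxj, hsupp⟩]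
      rw [Finset.prod_div_distrib, Finset.prod_const, pow_sub₀ ε hεne hle]
      have hEc : ε ^ E.card ≠ 0 := pow_ne_zero _ hεne
      have hdc : ε ^ (d - 1) ≠ 0 := pow_ne_zero _ hεne
      field_simp
    · have hLE : L E = 0 := by
        rw [hLdef]
        exact if_neg (fun hc => hPE hc.1)
      rw [hLE]
      refine Filter.Tendsto.congr' ?_ (tendsto_const_nhds (x := (0:ℝ)))
      filter_upwards with ε
      rw [if_neg hPE, zero_div]
  -- the sum of the limits is h
  have hsum : ∑ E ∈ D.powerset, L E = (h : ℝ) := by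
    have hset : {x : Fin n → ZMod 2 | x ∈ C ∧ x j = 1 ∧ wt x = d ∧ ∀ k ∈ S, x k = 0} =
        ↑((univ : Finset (Fin n → ZMod 2)).filter
          (fun x => x ∈ C ∧ x j = 1 ∧ wt x = d ∧ ∀ k ∈ S, x k = 0)) := by
      ext x; simp
    set B := (univ : Finset (Fin n → ZMod 2)).filter
      (fun x => x ∈ C ∧ x j = 1 ∧ wt x = d ∧ ∀ k ∈ S, x k = 0) with hB
    have hhB : h = B.card := by
      rw [hh, hset, Set.ncard_coe_finset]
    have hLsum : ∑ E ∈ D.powerset, L E =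
        ((D.powerset.filter (fun E => P E ∧ (∀ k ∈ E, k ∉ S) ∧ E.card = d - 1)).card : ℝ) := by
      simp [hLdef, Finset.sum_boole]
      convert Finset.sum_boole _ _
    rw [hLsum, hhB]
    norm_cast
    symm
    refine Finset.card_bij (fun x _ => (univ.filter (fun k => x k ≠ 0)).erase j) ?_ ?_ ?_
    · intro x hx
      rw [hB, Finset.mem_filter] at hx
      obtain ⟨-, hxC, hxj, hxw, hxS⟩ := hx
      have hjsupp : j ∈ univ.filter (fun k => x k ≠ 0) := by
        simp [hxj]
      rw [Finset.mem_filter]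
      refine ⟨Finset.mem_powerset.2 (Finset.erase_subset_erase j (Finset.subset_univ _)), ?_, ?_, ?_⟩
      · exact ⟨x, hxC, hxj, by rw [Finset.insert_erase hjsupp]⟩
      · intro k hk hkS
        have := (Finset.mem_filter.1 (Finset.mem_of_mem_erase hk)).2
        exact this (hxS k hkS)
      · rw [Finset.card_erase_of_mem hjsupp]
        change wt x - 1 = d - 1
        rw [hxw]
    · intro x hx y hy hxy
      rw [hB, Finset.mem_filter] at hx hy
      have hjx : j ∈ univ.filter (fun k => x k ≠ 0) := by simp [hx.2.2.1]
      have hjy : j ∈ univ.filter (fun k => y k ≠ 0) := by simp [hy.2.2.1]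
      have hxy' : (univ.filter (fun k => x k ≠ 0)).erase j =
          (univ.filter (fun k => y k ≠ 0)).erase j := hxy
      have hs : univ.filter (fun k => x k ≠ 0) = univ.filter (fun k => y k ≠ 0) := by
        rw [← Finset.insert_erase hjx, ← Finset.insert_erase hjy, hxy']
      funext k
      by_cases hk : x k ≠ 0
      · have hky : k ∈ univ.filter (fun k => y k ≠ 0) := by
          rw [← hs]; simp [hk]
        have hky' : y k ≠ 0 := (Finset.mem_filter.1 hky).2
        rw [(zmod2_ne_zero_iff _).1 hk, (zmod2_ne_zero_iff _).1 hky']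
      · push_neg at hk
        have hky : k ∉ univ.filter (fun k => y k ≠ 0) := by
          rw [← hs]; simp [hk]
        have : ¬ y k ≠ 0 := fun hc => hky (by simp [hc])
        push_neg at this
        rw [hk, this]
    · intro E hEt
      rw [Finset.mem_filter] at hEt
      obtain ⟨hEp, ⟨x, hxC, hxj, hsupp⟩, hES, hEc⟩ := hEt
      rw [Finset.mem_powerset] at hEp
      have hjE : j ∉ E := fun hmem => (Finset.mem_erase.1 (hEp hmem)).1 rfl
      have hcardins : (insert j E).card = d := by
        rw [Finset.card_insert_of_notMem hjE, hEc]; clear hh; omega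
      have hwle : wt x ≤ d := by
        have := Finset.card_le_card hsupp
        rwa [hcardins] at this
      have hwt : wt x = d := le_antisymm hwle (hd_lb x hxC hxj)
      have hseq : univ.filter (fun k => x k ≠ 0) = insert j E := by
        refine Finset.eq_of_subset_of_card_le hsupp ?_
        rw [hcardins]
        exact hwt.ge
      refine ⟨x, ?_, ?_⟩
      · rw [hB, Finset.mem_filter]
        refine ⟨Finset.mem_univ _, hxC, hxj, hwt, ?_⟩
        intro k hkS
        by_contra hk
        have hkmem : k ∈ insert j E := by rw [← hseq]; simp [hk]
        rcases Finset.mem_insert.1 hkmem with rfl | hkE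
        · exact hjS hkS
        · exact hES k hkE hkS
      · show (univ.filter (fun k => x k ≠ 0)).erase j = E
        rw [hseq, Finset.erase_insert hjE]
  -- assemble
  have hfinal := tendsto_finset_sum D.powerset hterm
  rw [hsum] at hfinal
  exact hfinal.congr (fun ε => (hfun ε).symm)
end

section
/- Let m ∈ ℕ and let μ be the product of m standard Gaussian measures on ℝ^m (i.e., Z_1,…,Z_m i.i.d. standard normal). Let a, b ∈ ℝ^m be unit vectors with inner product ⟨a,b⟩ < 1. Then μ{z : ⟨a,z⟩ > t and ⟨b,z⟩ > t} / μ{z : ⟨a,z⟩ > t} → 0 as t → ∞; that is, the joint tail probability of two non-identical unit-variance Gaussian linear functionals is little-o of the single tail probability. -/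
open Finset MeasureTheory ProbabilityTheory

/-- The standard Gaussian tail function `Q(t) = P(Z > t)` for `Z ~ N(0,1)`. -/
noncomputable def Qfun (t : ℝ) : ℝ := ((gaussianReal 0 1) {y | t < y}).toReal

section aux
open Real Filter
open scoped NNReal

lemma gpdf_mul_eq (v1 v2 : ℝ≥0) (hv1 : v1 ≠ 0) (hv2 : v2 ≠ 0) (u x : ℝ) :
    gaussianPDFReal 0 v1 x * gaussianPDFReal 0 v2 (u - x)
      = (gaussianPDFReal 0 (v1 + v2) u * (√(π / ((v1 + v2 : ℝ) / (2 * v1 * v2))))⁻¹)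
          * rexp (-((v1 + v2 : ℝ) / (2 * v1 * v2)) * (x - v1 * u / (v1 + v2)) ^ 2) := by
  have hp : (0:ℝ) < v1 := lt_of_le_of_ne v1.coe_nonneg (by exact_mod_cast (Ne.symm hv1))
  have hq : (0:ℝ) < v2 := lt_of_le_of_ne v2.coe_nonneg (by exact_mod_cast (Ne.symm hv2))
  have hpq : (0:ℝ) < (v1:ℝ) + v2 := by linarith
  have hπ : (0:ℝ) < π := Real.pi_pos
  simp only [gaussianPDFReal, sub_zero, NNReal.coe_add]
  rw [mul_mul_mul_comm, ← Real.exp_add]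
  have hA : π / (((v1:ℝ) + v2) / (2 * v1 * v2)) = 2 * π * v1 * v2 / ((v1:ℝ) + v2) := by
    field_simp
  have hK : (√(2 * π * v1))⁻¹ * (√(2 * π * v2))⁻¹
      = (√(2 * π * ((v1:ℝ) + v2)))⁻¹ * (√(2 * π * v1 * v2 / ((v1:ℝ) + v2)))⁻¹ := by
    rw [← Real.sqrt_inv, ← Real.sqrt_inv, ← Real.sqrt_inv, ← Real.sqrt_inv,
      ← Real.sqrt_mul (by positivity), ← Real.sqrt_mul (by positivity)]
    congr 1
    field_simp
  have hexp : -x ^ 2 / (2 * v1) + -(u - x) ^ 2 / (2 * v2)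
      = -u ^ 2 / (2 * ((v1:ℝ) + v2)) + -(((v1:ℝ) + v2) / (2 * v1 * v2)) * (x - v1 * u / ((v1:ℝ) + v2)) ^ 2 := by
    field_simp
    ring
  rw [hA, hK, hexp, Real.exp_add]; ring

lemma Apos (v1 v2 : ℝ≥0) (hv1 : v1 ≠ 0) (hv2 : v2 ≠ 0) :
    (0:ℝ) < ((v1 + v2 : ℝ≥0) : ℝ) / (2 * v1 * v2) := by
  have hp : (0:ℝ) < v1 := lt_of_le_of_ne v1.coe_nonneg (by exact_mod_cast (Ne.symm hv1))
  have hq : (0:ℝ) < v2 := lt_of_le_of_ne v2.coe_nonneg (by exact_mod_cast (Ne.symm hv2))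
  push_cast
  positivity

lemma gpdf_conv_integrable (v1 v2 : ℝ≥0) (hv1 : v1 ≠ 0) (hv2 : v2 ≠ 0) (u : ℝ) :
    Integrable (fun x => gaussianPDFReal 0 v1 x * gaussianPDFReal 0 v2 (u - x)) := by
  simp only [gpdf_mul_eq v1 v2 hv1 hv2 u]
  have hA := Apos v1 v2 hv1 hv2
  push_cast at hA ⊢
  exact (((integrable_exp_neg_mul_sq hA).comp_sub_right _).const_mul _)

lemma gpdf_conv (v1 v2 : ℝ≥0) (hv1 : v1 ≠ 0) (hv2 : v2 ≠ 0) (u : ℝ) :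
    ∫ x, gaussianPDFReal 0 v1 x * gaussianPDFReal 0 v2 (u - x)
      = gaussianPDFReal 0 (v1 + v2) u := by
  have hA := Apos v1 v2 hv1 hv2
  simp only [gpdf_mul_eq v1 v2 hv1 hv2 u]
  rw [integral_const_mul]
  have h1 : ∫ x : ℝ, rexp (-(((v1 + v2 : ℝ≥0) : ℝ) / (2 * v1 * v2)) * (x - v1 * u / ((v1:ℝ) + v2)) ^ 2)
      = √(π / (((v1 + v2 : ℝ≥0) : ℝ) / (2 * v1 * v2))) := by
    push_cast
    rw [integral_sub_right_eq_self (μ := volume)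
      (fun x : ℝ => rexp (-(((v1:ℝ) + v2) / (2 * v1 * v2)) * x ^ 2)) (v1 * u / ((v1:ℝ) + v2))]
    push_cast at hA
    exact integral_gaussian _
  push_cast at h1 ⊢
  rw [h1, mul_assoc, inv_mul_cancel₀ (by positivity), mul_one]

lemma gaussianReal_conv (v1 v2 : ℝ≥0) :
    Measure.conv (gaussianReal 0 v1) (gaussianReal 0 v2) = gaussianReal 0 (v1 + v2) := by
  by_cases hv1 : v1 = 0
  · subst hv1
    rw [gaussianReal_zero_var, Measure.dirac_zero_conv, zero_add]
  by_cases hv2 : v2 = 0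
  · subst hv2
    rw [gaussianReal_zero_var, Measure.conv_dirac_zero, add_zero]
  have hv12 : v1 + v2 ≠ 0 := by simp [hv1, hv2]
  ext s hs
  rw [Measure.conv, Measure.map_apply measurable_add hs,
    Measure.prod_apply (measurable_add hs)]
  have h1 : ∀ x : ℝ, (Prod.mk x ⁻¹' ((fun p : ℝ × ℝ => p.1 + p.2) ⁻¹' s))
      = (fun y => x + y) ⁻¹' s := fun x => rfl
  simp_rw [h1]
  have h2 : ∀ x : ℝ, gaussianReal 0 v2 ((fun y => x + y) ⁻¹' s)
      = ∫⁻ u in s, gaussianPDF 0 v2 (u - x) := by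
    intro x
    have : gaussianReal 0 v2 ((fun y => x + y) ⁻¹' s)
        = ((gaussianReal 0 v2).map (x + ·)) s := by
      rw [Measure.map_apply (by fun_prop) hs]
    rw [this, gaussianReal_map_const_add, zero_add, gaussianReal_apply _ hv2 s]
    congr 1 with u
    rw [gaussianPDF, gaussianPDF, gaussianPDFReal_sub, zero_add]
  simp_rw [h2]
  rw [gaussianReal_of_var_ne_zero _ hv1,
    lintegral_withDensity_eq_lintegral_mul _ (measurable_gaussianPDF _ _)
      (by exact Measurable.lintegral_prod_right ((measurable_gaussianPDF 0 v2).comp (by fun_prop)))]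
  rw [gaussianReal_apply _ hv12 s]
  have h3 : ∀ x : ℝ, gaussianPDF 0 v1 x * ∫⁻ u in s, gaussianPDF 0 v2 (u - x)
      = ∫⁻ u in s, gaussianPDF 0 v1 x * gaussianPDF 0 v2 (u - x) := by
    intro x
    rw [← lintegral_const_mul _ (show Measurable fun u : ℝ => gaussianPDF 0 v2 (u - x) from
      (measurable_gaussianPDF 0 v2).comp (by fun_prop))]
  simp only [Pi.mul_apply]
  rw [lintegral_congr h3]
  rw [lintegral_lintegral_swap (by
    change AEMeasurable ((fun p : ℝ × ℝ => gaussianPDF 0 v1 p.1) * (fun p : ℝ × ℝ => gaussianPDF 0 v2 (p.2 - p.1))) _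
    apply AEMeasurable.mul
    · exact ((measurable_gaussianPDF 0 v1).comp measurable_fst).aemeasurable
    · exact ((measurable_gaussianPDF 0 v2).comp (by fun_prop)).aemeasurable)]
  refine setLIntegral_congr_fun hs (fun u _ => ?_)
  have h4 : ∀ x : ℝ, gaussianPDF 0 v1 x * gaussianPDF 0 v2 (u - x)
      = ENNReal.ofReal (gaussianPDFReal 0 v1 x * gaussianPDFReal 0 v2 (u - x)) := by
    intro x
    rw [gaussianPDF, gaussianPDF, ← ENNReal.ofReal_mul (gaussianPDFReal_nonneg _ _ _)]
  simp_rw [h4]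
  rw [← ofReal_integral_eq_lintegral_ofReal (gpdf_conv_integrable v1 v2 hv1 hv2 u)
    (ae_of_all _ fun x => mul_nonneg (gaussianPDFReal_nonneg _ _ _) (gaussianPDFReal_nonneg _ _ _)),
    gpdf_conv v1 v2 hv1 hv2 u]
  rfl

lemma map_linear_pi_gaussian : ∀ (m : ℕ) (a : Fin m → ℝ),
    (Measure.pi fun _ : Fin m => gaussianReal 0 1).map (fun z => ∑ j, a j * z j)
      = gaussianReal 0 (∑ j, a j ^ 2).toNNReal := by
  intro m
  induction m with
  | zero =>
    intro a
    simp only [Finset.univ_eq_empty, Finset.sum_empty, Real.toNNReal_zero,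
      gaussianReal_zero_var]
    rw [show (fun z : Fin 0 → ℝ => (0:ℝ)) = fun _ => 0 from rfl, Measure.map_const]
    simp
  | succ n ih =>
    intro a
    have hmp := measurePreserving_piFinSuccAbove (fun _ : Fin (n+1) => gaussianReal 0 1) 0
    set e := MeasurableEquiv.piFinSuccAbove (fun _ : Fin (n+1) => ℝ) 0 with he
    have hfe : (fun z : Fin (n+1) → ℝ => ∑ j, a j * z j)
        = (fun p : ℝ × (Fin n → ℝ) => a 0 * p.1 + ∑ j : Fin n, a j.succ * p.2 j) ∘ e := by
      funext z
      simp only [Function.comp_apply, he, MeasurableEquiv.piFinSuccAbove_apply]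
      rw [Fin.sum_univ_succ]
      simp [Fin.removeNth, Fin.succAbove, Fin.tail]
    rw [hfe, ← Measure.map_map (by fun_prop) e.measurable, hmp.map_eq]
    have hg : (fun p : ℝ × (Fin n → ℝ) => a 0 * p.1 + ∑ j : Fin n, a j.succ * p.2 j)
        = (fun q : ℝ × ℝ => q.1 + q.2) ∘
          (Prod.map (fun x : ℝ => a 0 * x) (fun z : Fin n → ℝ => ∑ j, a j.succ * z j)) := rfl
    rw [hg, ← Measure.map_map (by fun_prop) (by fun_prop),
      ← Measure.map_prod_map _ _ (by fun_prop) (by fun_prop)]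
    have h1 : (gaussianReal 0 1).map (fun x : ℝ => a 0 * x)
        = gaussianReal 0 (.mk (a 0 ^ 2) (sq_nonneg _)) := by
      rw [show (fun x : ℝ => a 0 * x) = (a 0 * ·) from rfl, gaussianReal_map_const_mul,
        mul_zero, mul_one]
    rw [h1, ih (fun j => a j.succ), ← Measure.conv, gaussianReal_conv]
    congr 1
    ext1
    rw [Fin.sum_univ_succ]
    push_cast
    rw [Real.coe_toNNReal _ (by positivity)]
    try rfl
    all_goals rw [Real.coe_toNNReal _ (by positivity)]

lemma Qfun_eq (t : ℝ) : Qfun t = ∫ x in Set.Ioi t, gaussianPDFReal 0 1 x := by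
  have h : {y : ℝ | t < y} = Set.Ioi t := rfl
  rw [Qfun, h, gaussianReal_apply_eq_integral 0 one_ne_zero,
    ENNReal.toReal_ofReal (integral_nonneg fun x => gaussianPDFReal_nonneg _ _ _)]

lemma Qfun_pos (t : ℝ) : 0 < Qfun t := by
  rw [Qfun]
  refine ENNReal.toReal_pos ?_ (measure_ne_top _ _)
  have h : {y : ℝ | t < y} = Set.Ioi t := rfl
  rw [h, gaussianReal_apply 0 one_ne_zero]
  rw [← pos_iff_ne_zero, lintegral_pos_iff_support (measurable_gaussianPDF 0 1)]
  have hsupp : Function.support (gaussianPDF 0 1) = Set.univ := by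
    ext x
    simp only [Function.mem_support, Set.mem_univ, iff_true]
    exact (gaussianPDF_pos 0 one_ne_zero x).ne'
  rw [hsupp, Measure.restrict_apply_univ]
  simp [Real.volume_Ioi]

lemma gpdf_one (x : ℝ) : gaussianPDFReal 0 1 x = (√(2 * π))⁻¹ * rexp (-x ^ 2 / 2) := by
  simp [gaussianPDFReal]

lemma Qfun_le (u : ℝ) (hu : 1 ≤ u) : Qfun u ≤ (√(2 * π))⁻¹ * rexp (-u ^ 2 / 2) := by
  have hJ : ∫ x in Set.Ioi u, (√(2 * π))⁻¹ * (x * rexp (-x ^ 2 / 2))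
      = (√(2 * π))⁻¹ * rexp (-u ^ 2 / 2) := by
    rw [integral_const_mul]
    congr 1
    have := integral_Ioi_of_hasDerivAt_of_tendsto' (a := u)
      (f := fun x : ℝ => -rexp (-x ^ 2 / 2)) (f' := fun x : ℝ => x * rexp (-x ^ 2 / 2))
      (fun x _ => ?_) ?_ (m := 0) ?_
    · rw [this]; ring_nf
    · have h1 : HasDerivAt (fun x : ℝ => -x ^ 2 / 2) (-x) x := by
        have := ((hasDerivAt_pow 2 x).neg).div_const 2
        simpa using this.congr_deriv (by push_cast; ring)
      have := (h1.exp).neg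
      exact this.congr_deriv (by ring)
    · have : IntegrableOn (fun x : ℝ => x * rexp (-(1/2) * x ^ 2)) (Set.Ioi u) :=
        (integrable_mul_exp_neg_mul_sq (by norm_num : (0:ℝ) < 1/2)).integrableOn
      refine this.congr_fun (fun x _ => by ring_nf) measurableSet_Ioi
    · have : Tendsto (fun x : ℝ => rexp (-x ^ 2 / 2)) atTop (nhds 0) := by
        have h2 : Tendsto (fun x : ℝ => -x ^ 2 / 2) atTop atBot := by
          apply Filter.Tendsto.atBot_div_const two_pos
          exact tendsto_neg_atTop_atBot.comp (tendsto_pow_atTop two_ne_zero)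
        exact Real.tendsto_exp_atBot.comp h2
      simpa using this.neg
  rw [Qfun_eq, ← hJ]
  refine setIntegral_mono_on ?_ ?_ measurableSet_Ioi ?_
  · exact (integrable_gaussianPDFReal 0 1).integrableOn
  · rw [← hJ] at *
    have : IntegrableOn (fun x : ℝ => x * rexp (-(1/2) * x ^ 2)) (Set.Ioi u) :=
      (integrable_mul_exp_neg_mul_sq (by norm_num : (0:ℝ) < 1/2)).integrableOn
    exact ((this.congr_fun (fun x _ => by ring_nf) measurableSet_Ioi).const_mul _)
  · intro x hx
    rw [gpdf_one]
    have hx1 : 1 ≤ x := le_trans hu (le_of_lt hx)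
    have := mul_le_mul_of_nonneg_right hx1 (le_of_lt (Real.exp_pos (-x ^ 2 / 2)))
    rw [one_mul] at this
    exact mul_le_mul_of_nonneg_left this (by positivity)

lemma Qfun_ge (t : ℝ) (ht : 0 ≤ t) : (√(2 * π))⁻¹ * rexp (-(t + 1) ^ 2 / 2) ≤ Qfun t := by
  rw [Qfun_eq]
  have h1 : ∫ x in Set.Ioc t (t + 1), gaussianPDFReal 0 1 x
      ≤ ∫ x in Set.Ioi t, gaussianPDFReal 0 1 x := by
    apply setIntegral_mono_set (integrable_gaussianPDFReal 0 1).integrableOn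
      (ae_of_all _ fun x => gaussianPDFReal_nonneg _ _ _)
    exact HasSubset.Subset.eventuallyLE Set.Ioc_subset_Ioi_self
  refine le_trans ?_ h1
  have h2 := setIntegral_ge_of_const_le (μ := volume) (c := (√(2 * π))⁻¹ * rexp (-(t + 1) ^ 2 / 2))
    (s := Set.Ioc t (t + 1)) (f := gaussianPDFReal 0 1) measurableSet_Ioc
    (by simp [Real.volume_Ioc]) ?_ (integrable_gaussianPDFReal 0 1).integrableOn
  · calc (√(2 * π))⁻¹ * rexp (-(t + 1) ^ 2 / 2)
        = (√(2 * π))⁻¹ * rexp (-(t + 1) ^ 2 / 2) * (volume (Set.Ioc t (t + 1))).toReal := by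
          simp [Real.volume_Ioc]
      _ ≤ _ := by rw [smul_eq_mul, mul_comm] at h2; exact h2
  · intro x hx
    rw [gpdf_one]
    refine mul_le_mul_of_nonneg_left ?_ (by positivity)
    apply Real.exp_le_exp.mpr
    have hx1 := hx.1; have hx2 := hx.2
    nlinarith
end aux

section aux2
open Real Filter
open scoped NNReal

/-- for i.i.d. standard Gaussians `Z_1, …, Z_m` and distinct unit vectors
`a, b` (i.e. `⟨a,b⟩ < 1`), the joint tail `P(⟨a,Z⟩ > t, ⟨b,Z⟩ > t)` is little-o of the
single tail `P(⟨a,Z⟩ > t)` as `t → ∞`. -/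
theorem joint_gaussian_tail_littleO
    (m : ℕ) (μ : Measure (Fin m → ℝ))
    (hμ : μ = Measure.pi (fun _ : Fin m => gaussianReal 0 1))
    (a b : Fin m → ℝ)
    (ha : ∑ j, a j ^ 2 = 1) (hb : ∑ j, b j ^ 2 = 1)
    (hab : ∑ j, a j * b j < 1) :
    Filter.Tendsto (fun t : ℝ =>
      (μ {z | t < ∑ j, a j * z j ∧ t < ∑ j, b j * z j}).toReal /
        (μ {z | t < ∑ j, a j * z j}).toReal)
      Filter.atTop (nhds 0) := by
  subst hμ
  set μ := Measure.pi (fun _ : Fin m => gaussianReal 0 1) with hμ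
  -- denominator
  have hden : ∀ t : ℝ, (μ {z | t < ∑ j, a j * z j}).toReal = Qfun t := by
    intro t
    have h1 : {z : Fin m → ℝ | t < ∑ j, a j * z j}
        = (fun z => ∑ j, a j * z j) ⁻¹' (Set.Ioi t) := rfl
    rw [h1, ← Measure.map_apply (by fun_prop) measurableSet_Ioi,
      map_linear_pi_gaussian m a, ha, Real.toNNReal_one, Qfun]
    rfl
  -- numerator bound
  set c2 : ℝ := ∑ j, (a j + b j) ^ 2 with hc2
  have hc2e : c2 = 2 + 2 * ∑ j, a j * b j := by
    have : c2 = ∑ j, (a j ^ 2 + 2 * (a j * b j) + b j ^ 2) := by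
      apply Finset.sum_congr rfl; intro j _; ring
    rw [this, Finset.sum_add_distrib, Finset.sum_add_distrib, ha, hb, ← Finset.mul_sum]
    ring
  have hc2nn : 0 ≤ c2 := Finset.sum_nonneg fun j _ => sq_nonneg _
  have hc2lt : c2 < 4 := by rw [hc2e]; linarith
  have hnum : ∀ t : ℝ, μ {z | t < ∑ j, a j * z j ∧ t < ∑ j, b j * z j}
      ≤ gaussianReal 0 c2.toNNReal (Set.Ioi (2 * t)) := by
    intro t
    have hsub : {z : Fin m → ℝ | t < ∑ j, a j * z j ∧ t < ∑ j, b j * z j}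
        ⊆ (fun z => ∑ j, (a j + b j) * z j) ⁻¹' (Set.Ioi (2 * t)) := by
      intro z hz
      simp only [Set.mem_preimage, Set.mem_Ioi]
      have hsum : ∑ j, (a j + b j) * z j = (∑ j, a j * z j) + ∑ j, b j * z j := by
        rw [← Finset.sum_add_distrib]
        apply Finset.sum_congr rfl; intro j _; ring
      rw [hsum]
      exact lt_of_lt_of_le (by linarith [hz.1, hz.2] : 2 * t < _) le_rfl
    calc μ _ ≤ μ ((fun z => ∑ j, (a j + b j) * z j) ⁻¹' (Set.Ioi (2 * t))) :=
          measure_mono hsub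
      _ = gaussianReal 0 c2.toNNReal (Set.Ioi (2 * t)) := by
          rw [← Measure.map_apply (by fun_prop) measurableSet_Ioi,
            map_linear_pi_gaussian m (fun j => a j + b j)]
  by_cases hc2z : c2 = 0
  · -- degenerate case
    apply Filter.Tendsto.congr' _ tendsto_const_nhds
    filter_upwards [Filter.eventually_gt_atTop 0] with t ht
    have h0 : gaussianReal 0 c2.toNNReal (Set.Ioi (2 * t)) = 0 := by
      rw [hc2z, Real.toNNReal_zero, gaussianReal_zero_var, Measure.dirac_apply' _ measurableSet_Ioi]
      simp only [Set.indicator_apply, Set.mem_Ioi]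
      rw [if_neg (by intro h; linarith)]
    have : μ {z | t < ∑ j, a j * z j ∧ t < ∑ j, b j * z j} = 0 :=
      le_antisymm (h0 ▸ hnum t) zero_le
    rw [this]
    simp
  · -- main case
    have hc2pos : 0 < c2 := lt_of_le_of_ne hc2nn (Ne.symm hc2z)
    set s : ℝ := √c2 with hs
    have hspos : 0 < s := Real.sqrt_pos.mpr hc2pos
    have hs2 : s ^ 2 = c2 := Real.sq_sqrt hc2nn
    have hslt : s < 2 := by
      rw [hs, show (2:ℝ) = √4 by rw [show (4:ℝ) = 2^2 by norm_num, Real.sqrt_sq two_pos.le]]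
      exact Real.sqrt_lt_sqrt hc2nn hc2lt
    set c : ℝ := 2 / s with hc
    have hc1 : 1 < c := (one_lt_div hspos).mpr hslt
    -- numerator toReal bound
    have hnum2 : ∀ t : ℝ, (μ {z | t < ∑ j, a j * z j ∧ t < ∑ j, b j * z j}).toReal
        ≤ Qfun (c * t) := by
      intro t
      have hmap : gaussianReal 0 c2.toNNReal = (gaussianReal 0 1).map (s * ·) := by
        rw [gaussianReal_map_const_mul, mul_zero, mul_one]
        congr 1
        ext1
        rw [Real.coe_toNNReal _ hc2nn]
        exact hs2.symm
      have hpre : (s * ·) ⁻¹' (Set.Ioi (2 * t)) = Set.Ioi (c * t) := by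
        ext x
        simp only [Set.mem_preimage, Set.mem_Ioi]
        rw [hc, div_mul_eq_mul_div, div_lt_iff₀ hspos, mul_comm x s]
      have h2 : gaussianReal 0 c2.toNNReal (Set.Ioi (2 * t)) = gaussianReal 0 1 (Set.Ioi (c * t)) := by
        rw [hmap, Measure.map_apply (by fun_prop) measurableSet_Ioi, hpre]
      have := hnum t
      rw [h2] at this
      have h3 := ENNReal.toReal_mono (measure_ne_top _ _) this
      rwa [show (gaussianReal 0 1 (Set.Ioi (c * t))).toReal = Qfun (c * t) from rfl] at h3
    -- squeeze
    have hg : Filter.Tendsto (fun t : ℝ => rexp (((t + 1) ^ 2 - (c * t) ^ 2) / 2))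
        atTop (nhds 0) := by
      have hin : Filter.Tendsto (fun t : ℝ => ((t + 1) ^ 2 - (c * t) ^ 2) / 2) atTop atBot := by
        have heq : (fun t : ℝ => ((t + 1) ^ 2 - (c * t) ^ 2) / 2)
            = fun t : ℝ => (t * ((1 - c ^ 2) * t + 2) + 1) / 2 := by
          funext t; ring
        rw [heq]
        apply Filter.Tendsto.atBot_div_const two_pos
        apply tendsto_atBot_add_const_right
        apply Filter.Tendsto.atTop_mul_atBot₀ tendsto_id
        apply tendsto_atBot_add_const_right
        have hneg : 1 - c ^ 2 < 0 := by nlinarith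
        exact Filter.Tendsto.const_mul_atTop_of_neg hneg tendsto_id
      exact Real.tendsto_exp_atBot.comp hin
    apply tendsto_of_tendsto_of_tendsto_of_le_of_le' tendsto_const_nhds hg
    · filter_upwards with t
      exact div_nonneg ENNReal.toReal_nonneg ENNReal.toReal_nonneg
    · filter_upwards [Filter.eventually_ge_atTop 1] with t ht
      have hct : 1 ≤ c * t := by nlinarith
      have h1 : (μ {z | t < ∑ j, a j * z j ∧ t < ∑ j, b j * z j}).toReal /
          (μ {z | t < ∑ j, a j * z j}).toReal ≤ Qfun (c * t) / Qfun t := by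
        rw [hden t]
        exact div_le_div₀ (Qfun_pos (c * t)).le (hnum2 t) (Qfun_pos t) le_rfl
      refine h1.trans ?_
      have h2 : Qfun (c * t) / Qfun t
          ≤ ((√(2 * π))⁻¹ * rexp (-(c * t) ^ 2 / 2)) / ((√(2 * π))⁻¹ * rexp (-(t + 1) ^ 2 / 2)) := by
        exact div_le_div₀ (by positivity) (Qfun_le _ hct) (by positivity) (Qfun_ge t (by linarith))
      refine h2.trans (le_of_eq ?_)
      rw [mul_div_mul_left _ _ (by positivity), ← Real.exp_sub]
      congr 1
      ring

end aux2
end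

section
/- Let n ≥ 2, let C = {c ∈ F_2^n : Σ_j c_j = 0} be the single parity-check code of length n, let i be a coordinate, and let L : Fin n → ℝ. Then log( (Σ_{c ∈ C, c_i = 0} exp(Σ_{j ≠ i} (1 − c_j)·L_j)) / (Σ_{c ∈ C, c_i = 1} exp(Σ_{j ≠ i} (1 − c_j)·L_j)) ) = 2·artanh( Π_{j ≠ i} tanh(L_j / 2) ), where c_j ∈ {0,1} is regarded as a real number. That is, the exact APP log-likelihood message of a single parity-check node coincides with the tanh-rule check-node update of belief propagation. -/
open Finset

lemma zmod2_cases : ∀ x : ZMod 2, x = 0 ∨ x = 1 := by decide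

lemma sum_zmod2 (f : ZMod 2 → ℝ) : ∑ x : ZMod 2, f x = f 0 + f 1 :=
  Fin.sum_univ_two f

lemma val0 : ((0:ZMod 2).val : ℝ) = 0 := by norm_num [show (0:ZMod 2).val = 0 from rfl]
lemma val1 : ((1:ZMod 2).val : ℝ) = 1 := by norm_num [show (1:ZMod 2).val = 1 from rfl]

lemma hadd (x y : ZMod 2) : ((-1:ℝ))^((x+y).val) = (-1)^x.val * (-1)^y.val := by
  rcases zmod2_cases x with rfl | rfl <;> rcases zmod2_cases y with rfl | rfl <;>
    norm_num [show (1:ZMod 2) + 1 = 0 from by decide, show ZMod.val (2:ZMod 2) = 0 from rfl, show ZMod.val (1:ZMod 2) = 1 from rfl,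
      show ZMod.val (0:ZMod 2) = 0 from rfl]

lemma sum_prod_fac (n : ℕ) (G : Fin n → ZMod 2 → ℝ) :
    ∑ c : Fin n → ZMod 2, ∏ j, G j (c j) = ∏ j, (G j 0 + G j 1) := by
  have := Finset.prod_univ_sum (fun _ : Fin n => (univ : Finset (ZMod 2))) G
  simp only [Fintype.piFinset_univ] at this
  rw [← this]
  exact Finset.prod_congr rfl fun j _ => sum_zmod2 (G j)

lemma tanh_half (x : ℝ) : Real.tanh (x/2) = (Real.exp x - 1)/(Real.exp x + 1) := by
  have h : Real.exp x = Real.exp (x/2) * Real.exp (x/2) := by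
    rw [← Real.exp_add]; ring_nf
  have hp : Real.exp (x/2) > 0 := Real.exp_pos _
  rw [Real.tanh_eq_sinh_div_cosh, Real.sinh_eq, Real.cosh_eq, h, Real.exp_neg]
  have hne : Real.exp (x/2) ≠ 0 := ne_of_gt hp
  field_simp

lemma prod_neg_one {n : ℕ} (s : Finset (Fin n)) (c : Fin n → ZMod 2) :
    ∏ j ∈ s, ((-1:ℝ))^((c j).val) = (-1)^((∑ j ∈ s, c j).val) := by
  classical
  induction s using Finset.induction with
  | empty => simp [show ZMod.val (0:ZMod 2) = 0 from rfl]
  | insert _ _ h ih => rw [Finset.prod_insert h, Finset.sum_insert h, ih, hadd]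

lemma helper {n : ℕ} (i : Fin n) (b : ZMod 2) (w : ZMod 2 → ℝ) (L : Fin n → ℝ) :
    ∑ c ∈ univ.filter (fun c : Fin n → ZMod 2 => c i = b),
      ∏ j ∈ univ.erase i, (w (c j) * Real.exp ((1 - ((c j).val:ℝ)) * L j))
    = ∏ j ∈ univ.erase i, (w 0 * Real.exp (L j) + w 1) := by
  classical
  set G : Fin n → ZMod 2 → ℝ := fun j x =>
    if j = i then (if x = b then 1 else 0) else w x * Real.exp ((1 - (x.val:ℝ)) * L j) with hG
  have h1 : ∀ c : Fin n → ZMod 2, ∏ j, G j (c j)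
      = (if c i = b then (1:ℝ) else 0)
        * ∏ j ∈ univ.erase i, (w (c j) * Real.exp ((1 - ((c j).val:ℝ)) * L j)) := by
    intro c
    rw [← Finset.mul_prod_erase univ _ (mem_univ i)]
    congr 1
    · simp [hG]
    · refine Finset.prod_congr rfl fun j hj => ?_
      have hji : j ≠ i := (Finset.mem_erase.mp hj).1
      simp [hG, hji]
  have h2 := sum_prod_fac n G
  rw [Finset.sum_congr rfl (fun c _ => h1 c)] at h2
  simp only [ite_mul, one_mul, zero_mul] at h2
  rw [← Finset.sum_filter] at h2
  rw [h2, ← Finset.mul_prod_erase univ _ (mem_univ i)]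
  have hGi : G i 0 + G i 1 = 1 := by
    rcases zmod2_cases b with rfl | rfl <;> simp [hG]
  rw [hGi, one_mul]
  refine Finset.prod_congr rfl fun j hj => ?_
  have hji : j ≠ i := (Finset.mem_erase.mp hj).1
  rw [hG]
  simp only [if_neg hji, val0, val1]
  norm_num

noncomputable def artanh (x : ℝ) : ℝ := Real.log ((1 + x) / (1 - x)) / 2

/-- for the single parity-check code of length `n ≥ 2`, the exact APP
log-likelihood message to coordinate `i` equals the belief-propagation tanh-rule check-node
update `2·artanh(Π_{j≠i} tanh(L_j/2))`. -/
theorem spc_app_eq_tanh_rule (n : ℕ) (hn : 2 ≤ n) (i : Fin n) (L : Fin n → ℝ) :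
    Real.log
      ((∑ c ∈ univ.filter (fun c : Fin n → ZMod 2 => (∑ j, c j) = 0 ∧ c i = 0),
          Real.exp (∑ j ∈ univ.erase i, (1 - ((c j).val : ℝ)) * L j)) /
        (∑ c ∈ univ.filter (fun c : Fin n → ZMod 2 => (∑ j, c j) = 0 ∧ c i = 1),
          Real.exp (∑ j ∈ univ.erase i, (1 - ((c j).val : ℝ)) * L j)))
      = 2 * artanh (∏ j ∈ univ.erase i, Real.tanh (L j / 2)) := by
  classical
  set S := (univ : Finset (Fin n)).erase i with hS
  set E : (Fin n → ZMod 2) → ℝ := fun c => ∑ j ∈ S, (1 - ((c j).val:ℝ)) * L j with hE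
  set χ : (Fin n → ZMod 2) → ℝ := fun c => ∏ j ∈ S, (-1:ℝ)^((c j).val) with hχ
  set T := ∏ j ∈ S, (Real.exp (L j) + 1) with hT
  set U := ∏ j ∈ S, (Real.exp (L j) - 1) with hU
  set p := ∏ j ∈ S, Real.tanh (L j / 2) with hp
  have hTb : ∀ b : ZMod 2,
      ∑ c ∈ univ.filter (fun c : Fin n → ZMod 2 => c i = b), Real.exp (E c) = T := by
    intro b
    have h := helper i b (fun _ => (1:ℝ)) L
    simp only [one_mul] at h
    rw [hT, hS, ← h]
    exact Finset.sum_congr rfl fun c _ => by simp only [hE, hS]; exact Real.exp_sum _ _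
  have hUb : ∀ b : ZMod 2,
      ∑ c ∈ univ.filter (fun c : Fin n → ZMod 2 => c i = b), χ c * Real.exp (E c) = U := by
    intro b
    have h := helper i b (fun x => ((-1:ℝ))^x.val) L
    simp only [show (0:ZMod 2).val = 0 from rfl, show (1:ZMod 2).val = 1 from rfl,
      pow_zero, pow_one, one_mul] at h
    rw [hU, hS, show (∏ j ∈ (univ:Finset (Fin n)).erase i, (Real.exp (L j) - 1))
        = ∏ j ∈ (univ:Finset (Fin n)).erase i, (Real.exp (L j) + -1) from
      Finset.prod_congr rfl fun j _ => by ring, ← h]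
    refine Finset.sum_congr rfl fun c _ => ?_
    simp only [hχ, hE, hS]
    rw [Real.exp_sum, ← Finset.prod_mul_distrib]
  have key : ∀ b : ZMod 2,
      2 * (∑ c ∈ univ.filter (fun c : Fin n → ZMod 2 => (∑ j, c j) = 0 ∧ c i = b),
        Real.exp (E c)) = T + (-1:ℝ)^b.val * U := by
    intro b
    have step1 : T + (-1:ℝ)^b.val * U
        = ∑ c ∈ univ.filter (fun c : Fin n → ZMod 2 => c i = b),
            (1 + (-1:ℝ)^b.val * χ c) * Real.exp (E c) := by
      rw [← hTb b, ← hUb b, Finset.mul_sum, ← Finset.sum_add_distrib]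
      exact Finset.sum_congr rfl fun c _ => by ring
    have step2 : ∀ c : Fin n → ZMod 2, c i = b →
        (1 + (-1:ℝ)^b.val * χ c) = if (∑ j, c j) = 0 then 2 else 0 := by
      intro c hc
      have hsum : (∑ j, c j) = b + ∑ j ∈ S, c j := by
        rw [hS, ← Finset.add_sum_erase univ c (mem_univ i), hc]
      have hχval : χ c = (-1:ℝ)^((∑ j ∈ S, c j).val) := prod_neg_one S c
      rcases zmod2_cases b with rfl | rfl <;> rcases zmod2_cases (∑ j ∈ S, c j) with h | h <;>
        rw [hχval, hsum, h] <;>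
        simp only [show (0:ZMod 2) + 0 = 0 from by decide, show (0:ZMod 2) + 1 = 1 from by decide,
          show (1:ZMod 2) + 0 = 1 from by decide, show (1:ZMod 2) + 1 = 0 from by decide,
          show ZMod.val (0:ZMod 2) = 0 from rfl, show ZMod.val (1:ZMod 2) = 1 from rfl] <;>
        norm_num [show (1:ZMod 2) ≠ 0 from by decide]
    rw [step1, Finset.sum_congr rfl (fun c hc =>
      show (1 + (-1:ℝ)^b.val * χ c) * Real.exp (E c)
          = (if (∑ j, c j) = 0 then (2:ℝ) else 0) * Real.exp (E c) from by
        rw [step2 c (Finset.mem_filter.mp hc).2])]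
    simp only [ite_mul, zero_mul]
    rw [← Finset.sum_filter, Finset.filter_filter, ← Finset.mul_sum]
    rw [show Finset.filter (fun c : Fin n → ZMod 2 => c i = b ∧ (∑ j, c j) = 0) univ
        = Finset.filter (fun c : Fin n → ZMod 2 => (∑ j, c j) = 0 ∧ c i = b) univ from by
      ext c; simp only [Finset.mem_filter, Finset.mem_univ, true_and]; exact and_comm]
  have hTpos : 0 < T := Finset.prod_pos fun j _ => by positivity
  have hUTp : U = T * p := by
    rw [hU, hT, hp, ← Finset.prod_mul_distrib]
    refine Finset.prod_congr rfl fun j _ => ?_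
    rw [tanh_half]
    field_simp
  have h0 := key 0
  have h1 := key 1
  simp only [show ZMod.val (0:ZMod 2) = 0 from rfl, show ZMod.val (1:ZMod 2) = 1 from rfl,
    pow_zero, pow_one, one_mul, neg_one_mul] at h0 h1
  have hN0 : (∑ c ∈ univ.filter (fun c : Fin n → ZMod 2 => (∑ j, c j) = 0 ∧ c i = 0),
      Real.exp (E c)) = (T + U) / 2 := by linarith
  have hN1 : (∑ c ∈ univ.filter (fun c : Fin n → ZMod 2 => (∑ j, c j) = 0 ∧ c i = 1),
      Real.exp (E c)) = (T - U) / 2 := by linarith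
  have hratio : (T + U) / 2 / ((T - U) / 2) = (1 + p) / (1 - p) := by
    have h2 : (2:ℝ) ≠ 0 := two_ne_zero
    rw [div_div_div_cancel_right₀]
    rw [hUTp, show T + T * p = T * (1 + p) from by ring,
      show T - T * p = T * (1 - p) from by ring,
      mul_div_mul_left _ _ (ne_of_gt hTpos)]
    exact h2
  simp only [hE] at hN0 hN1
  rw [hN0, hN1, hratio, artanh]
  ring
end
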